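/- arXiv:1410.8370 — 7 statements merged into one kernel-verified Lean document; each statement's English description precedes it below -/
import Mathlib

section
/- Let $X$ be a topological vector space, $C \subseteq X$ a nonempty bounded convex set, and $f : C \to C$ an affine map. Then there exists a sequence $(x_n)$ in $C$ such that $x_n - f(x_n) \to 0$. -/
open scoped Pointwise


/-- If `C` is a nonempty bounded convex subset of a topological vector space `X` and
`f : C → C` is an affine self-map, then `f` admits an approximate fixed point sequence. -/
theorem stmt0 {X : Type*} [AddCommGroup X] [Module ℝ X] [TopologicalSpace X]
    [IsTopologicalAddGroup X] [ContinuousSMul ℝ X]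
    (C : Set X) (hne : C.Nonempty) (hconv : Convex ℝ C)
    (hbdd : Bornology.IsVonNBounded ℝ C)
    (f : X → X) (hmaps : Set.MapsTo f C C)
    (haff : ∀ x ∈ C, ∀ y ∈ C, ∀ t : ℝ, t ∈ Set.Icc (0:ℝ) 1 →
      f (t • x + (1 - t) • y) = t • f x + (1 - t) • f y) :
    ∃ x : ℕ → X, (∀ n, x n ∈ C) ∧
      Filter.Tendsto (fun n => x n - f (x n)) Filter.atTop (nhds 0) := by
  obtain ⟨x0, hx0⟩ := hne
  set g : ℕ → X := fun k => f^[k] x0 with hg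
  have hgC : ∀ k, g k ∈ C := by
    intro k
    induction k with
    | zero => simpa [hg] using hx0
    | succ n ih =>
      have : g (n + 1) = f (g n) := by simp [hg, Function.iterate_succ_apply']
      rw [this]; exact hmaps ih
  set a : ℕ → X := fun n => ((n : ℝ) + 1)⁻¹ • ∑ k ∈ Finset.range (n + 1), g k with ha
  have haC : ∀ n, a n ∈ C := by
    intro n
    have h := hconv.sum_mem (t := Finset.range (n + 1)) (w := fun _ => ((n : ℝ) + 1)⁻¹)
      (z := g) (fun i _ => by positivity)
      (by
        rw [Finset.sum_const, Finset.card_range, nsmul_eq_mul]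
        field_simp
        exact Nat.cast_succ n)
      (fun i _ => hgC i)
    simpa [ha, Finset.smul_sum] using h
  have key : ∀ n, f (a n) = ((n : ℝ) + 1)⁻¹ • ∑ k ∈ Finset.range (n + 1), g (k + 1) := by
    intro n
    induction n with
    | zero => simp [ha, hg]
    | succ n ih =>
      set t : ℝ := ((n : ℝ) + 1) / ((n : ℝ) + 2) with ht
      have hn2 : ((n : ℝ) + 2) ≠ 0 := by positivity
      have hn1 : ((n : ℝ) + 1) ≠ 0 := by positivity
      have h1mt : 1 - t = ((n : ℝ) + 2)⁻¹ := by
        rw [ht]; field_simp; ring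
      have hdecomp : a (n + 1) = t • a n + (1 - t) • g (n + 1) := by
        rw [ha]
        simp only [Finset.sum_range_succ (n := n + 1)]
        rw [h1mt, smul_smul, ht]
        push_cast
        rw [smul_add]
        congr 1
        · congr 1
          field_simp
          ring
        · congr 1
          ring_nf
      have ht01 : t ∈ Set.Icc (0 : ℝ) 1 := by
        constructor
        · positivity
        · rw [ht, div_le_one (by positivity)]; linarith
      rw [hdecomp, haff _ (haC n) _ (hgC (n + 1)) t ht01, ih]
      have hfg : f (g (n + 1)) = g (n + 2) := by
        simp [hg, Function.iterate_succ_apply']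
      rw [hfg]
      rw [Finset.sum_range_succ (f := fun k => g (k + 1)) (n := n + 1)]
      rw [smul_add, smul_smul, h1mt]
      push_cast
      congr 2
      · rw [ht]; field_simp; ring
      · ring_nf
  refine ⟨a, haC, ?_⟩
  have hdiff : ∀ n, a n - f (a n) = ((n : ℝ) + 1)⁻¹ • (g 0 - g (n + 1)) := by
    intro n
    rw [key n, ha]
    simp only [← smul_sub]
    congr 1
    rw [← Finset.sum_sub_distrib]
    induction n with
    | zero => simp
    | succ m ihm =>
      rw [Finset.sum_range_succ, ihm]
      abel
  have hbdd' : Bornology.IsVonNBounded ℝ (C - C) := hbdd.sub hbdd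
  have hmem : ∀ n, g 0 - g (n + 1) ∈ C - C := fun n =>
    Set.sub_mem_sub (hgC 0) (hgC (n + 1))
  have hε : Filter.Tendsto (fun n : ℕ => ((n : ℝ) + 1)⁻¹) Filter.atTop (nhds 0) := by
    have := tendsto_one_div_add_atTop_nhds_zero_nat (𝕜 := ℝ)
    simpa [one_div] using this
  have := hbdd'.smul_tendsto_zero (ε := fun n : ℕ => ((n : ℝ) + 1)⁻¹)
    (x := fun n : ℕ => g 0 - g (n + 1)) (Filter.Eventually.of_forall hmem) hε
  simp only [hdiff]; exact this
end

section
/- Let $G$ be a group acting by affine maps on a convex subset $C$ of a vector space. For finite nonempty subsets $\Phi \subseteq G$, a fixed $x \in C$, and $\gamma \in G$, setting $x_\Phi = \frac{1}{|\Phi|}\sum_{g \in \Phi} g \cdot x$, one has $x_\Phi - \gamma \cdot x_\Phi \in \frac{|\gamma\Phi \triangle \Phi|}{2|\Phi|}(C - C)$, where $C - C = \{c - c' : c, c' \in C\}$ and $\triangle$ denotes symmetric difference. -/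
open scoped symmDiff Pointwise

theorem affine_sum' {G V : Type*} [AddCommGroup V] [Module ℝ V]
    (f : V → V) (C : Set V) (hconv : Convex ℝ C)
    (haff : ∀ x ∈ C, ∀ y ∈ C, ∀ t : ℝ, t ∈ Set.Icc (0:ℝ) 1 →
      f (t • x + (1 - t) • y) = t • f x + (1 - t) • f y) :
    ∀ (s : Finset G), ∀ (w : G → ℝ) (p : G → V),
      (∀ i ∈ s, 0 ≤ w i) → (∑ i ∈ s, w i = 1) → (∀ i ∈ s, p i ∈ C) →
      f (∑ i ∈ s, w i • p i) = ∑ i ∈ s, w i • f (p i) := by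
  intro s
  induction s using Finset.cons_induction with
  | empty => intro w p _ hw1 _; simp at hw1
  | cons a t ha ih =>
    intro w p hw hw1 hp
    rw [Finset.sum_cons] at hw1 ⊢
    rw [Finset.sum_cons]
    have hwa : 0 ≤ w a := hw a (Finset.mem_cons_self a t)
    have hwt : ∀ i ∈ t, 0 ≤ w i := fun i hi => hw i (Finset.mem_cons_of_mem hi)
    have hpt : ∀ i ∈ t, p i ∈ C := fun i hi => hp i (Finset.mem_cons_of_mem hi)
    have hpa : p a ∈ C := hp a (Finset.mem_cons_self a t)
    set W : ℝ := ∑ i ∈ t, w i with hW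
    have hW0 : 0 ≤ W := Finset.sum_nonneg hwt
    rcases eq_or_lt_of_le hW0 with hW0' | hWpos
    · -- W = 0 : all weights in t vanish
      have hz : ∀ i ∈ t, w i = 0 := by
        intro i hi
        exact (Finset.sum_eq_zero_iff_of_nonneg hwt).mp hW0'.symm i hi
      have h1 : w a = 1 := by rw [← hW0'] at hw1; linarith
      have hs1 : ∑ i ∈ t, w i • p i = 0 :=
        Finset.sum_eq_zero fun i hi => by rw [hz i hi, zero_smul]
      have hs2 : ∑ i ∈ t, w i • f (p i) = 0 :=
        Finset.sum_eq_zero fun i hi => by rw [hz i hi, zero_smul]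
      rw [hs1, hs2, h1, add_zero, add_zero, one_smul, one_smul]
    · -- W > 0
      have hWne : W ≠ 0 := ne_of_gt hWpos
      set y : V := ∑ i ∈ t, (w i / W) • p i with hy
      have hyC : y ∈ C := by
        apply hconv.sum_mem (fun i hi => div_nonneg (hwt i hi) hW0)
        · rw [← Finset.sum_div, div_self hWne]
        · exact hpt
      have hWy : W • y = ∑ i ∈ t, w i • p i := by
        rw [hy, Finset.smul_sum]
        refine Finset.sum_congr rfl fun i hi => ?_
        rw [smul_smul, mul_div_cancel₀ _ hWne]
      have hfy : f y = ∑ i ∈ t, (w i / W) • f (p i) := by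
        apply ih (fun i => w i / W) p (fun i hi => div_nonneg (hwt i hi) hW0)
          (by rw [← Finset.sum_div, div_self hWne]) hpt
      have hWa1 : W = 1 - w a := by linarith
      have hmem : w a ∈ Set.Icc (0:ℝ) 1 := ⟨hwa, by linarith⟩
      calc f (w a • p a + ∑ i ∈ t, w i • p i)
          = f (w a • p a + (1 - w a) • y) := by rw [← hWy, hWa1]
        _ = w a • f (p a) + (1 - w a) • f y := haff _ hpa _ hyC _ hmem
        _ = w a • f (p a) + ∑ i ∈ t, w i • f (p i) := by
            rw [hfy, ← hWa1, Finset.smul_sum]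
            congr 1
            refine Finset.sum_congr rfl fun i hi => ?_
            rw [smul_smul, mul_div_cancel₀ _ hWne]

/-- For a group acting by affine maps on a convex set `C`, the Følner-type average
`x_Φ = |Φ|⁻¹ ∑_{g ∈ Φ} g·x` satisfies
`x_Φ - γ·x_Φ ∈ (|γΦ ∆ Φ| / (2|Φ|)) • (C - C)`. -/
theorem stmt1 {G V : Type*} [Group G] [DecidableEq G] [AddCommGroup V] [Module ℝ V]
    (ρ : G → V → V) (C : Set V) (hconv : Convex ℝ C)
    (hone : ∀ v, ρ 1 v = v) (hmul : ∀ g h v, ρ (g * h) v = ρ g (ρ h v))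
    (hmaps : ∀ g, Set.MapsTo (ρ g) C C)
    (haff : ∀ g, ∀ x ∈ C, ∀ y ∈ C, ∀ t : ℝ, t ∈ Set.Icc (0:ℝ) 1 →
      ρ g (t • x + (1 - t) • y) = t • ρ g x + (1 - t) • ρ g y)
    (Φ : Finset G) (hΦ : Φ.Nonempty) (x : V) (hx : x ∈ C) (γ : G) :
    (Φ.card : ℝ)⁻¹ • (∑ g ∈ Φ, ρ g x) - ρ γ ((Φ.card : ℝ)⁻¹ • ∑ g ∈ Φ, ρ g x)
      ∈ ((((Φ.image (γ * ·)) ∆ Φ).card : ℝ) / (2 * Φ.card)) • (C - C) := by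
  have hn0 : (0:ℝ) < (Φ.card : ℝ) := Nat.cast_pos.mpr (Finset.card_pos.mpr hΦ)
  have hnne : (Φ.card : ℝ) ≠ 0 := ne_of_gt hn0
  set Ψ : Finset G := Φ.image (γ * ·) with hΨ
  have hinj : Function.Injective (γ * ·) := mul_right_injective γ
  have hΨcard : Ψ.card = Φ.card := Finset.card_image_of_injective _ hinj
  -- rewrite ρ γ of the average
  have key : ρ γ ((Φ.card : ℝ)⁻¹ • ∑ g ∈ Φ, ρ g x)
      = (Φ.card : ℝ)⁻¹ • ∑ g ∈ Ψ, ρ g x := by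
    have h1 : (Φ.card : ℝ)⁻¹ • ∑ g ∈ Φ, ρ g x = ∑ g ∈ Φ, (Φ.card : ℝ)⁻¹ • ρ g x := by
      rw [Finset.smul_sum]
    rw [h1, affine_sum' (ρ γ) C hconv (haff γ) Φ (fun _ => (Φ.card : ℝ)⁻¹)
      (fun g => ρ g x) (fun i _ => by positivity)
      (by rw [Finset.sum_const, nsmul_eq_mul, mul_inv_cancel₀ hnne])
      (fun i _ => hmaps i hx)]
    rw [hΨ, Finset.sum_image (fun a _ b _ h => hinj h), Finset.smul_sum]
    refine Finset.sum_congr rfl fun g _ => ?_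
    rw [← hmul]
  rw [key, ← smul_sub, ← Finset.sum_sdiff_sub_sum_sdiff]
  set k : ℕ := (Φ \ Ψ).card with hk
  have hkB : (Ψ \ Φ).card = k := by
    have h1 := Finset.card_sdiff_add_card_inter Φ Ψ
    have h2 := Finset.card_sdiff_add_card_inter Ψ Φ
    rw [Finset.inter_comm] at h2
    omega
  have hsym : (Ψ ∆ Φ).card = 2 * k := by
    rw [symmDiff_def]
    have : (Ψ \ Φ) ∪ (Φ \ Ψ) = Ψ \ Φ ⊔ Φ \ Ψ := rfl
    rw [← this, Finset.card_union_of_disjoint disjoint_sdiff_sdiff]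
    omega
  rcases Nat.eq_zero_or_pos k with hk0 | hkpos
  · -- k = 0 : Φ = Ψ, element is 0, coefficient is 0
    have hA : Φ \ Ψ = ∅ := Finset.card_eq_zero.mp (hk ▸ hk0)
    have hB : Ψ \ Φ = ∅ := Finset.card_eq_zero.mp (hkB.trans hk0)
    rw [hA, hB, Finset.sum_empty, sub_zero, smul_zero]
    have hc : ((Ψ ∆ Φ).card : ℝ) / (2 * Φ.card) = 0 := by
      rw [hsym, hk0]; simp
    rw [hc, Set.zero_smul_set ⟨x - x, Set.sub_mem_sub hx hx⟩]
    exact Set.zero_mem_zero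
  · have hkne : ((k:ℕ):ℝ) ≠ 0 := by exact_mod_cast hkpos.ne'
    have hkA : (Φ \ Ψ).card = k := hk.symm
    have haC : (k:ℝ)⁻¹ • ∑ g ∈ Φ \ Ψ, ρ g x ∈ C := by
      rw [Finset.smul_sum]
      exact hconv.sum_mem (fun i _ => by positivity)
        (by rw [Finset.sum_const, hkA, nsmul_eq_mul, mul_inv_cancel₀ hkne])
        (fun i _ => hmaps i hx)
    have hbC : (k:ℝ)⁻¹ • ∑ g ∈ Ψ \ Φ, ρ g x ∈ C := by
      rw [Finset.smul_sum]
      exact hconv.sum_mem (fun i _ => by positivity)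
        (by rw [Finset.sum_const, hkB, nsmul_eq_mul, mul_inv_cancel₀ hkne])
        (fun i _ => hmaps i hx)
    refine ⟨(k:ℝ)⁻¹ • ∑ g ∈ Φ \ Ψ, ρ g x - (k:ℝ)⁻¹ • ∑ g ∈ Ψ \ Φ, ρ g x,
      Set.sub_mem_sub haC hbC, ?_⟩
    rw [← smul_sub]
    dsimp only
    rw [smul_smul, hsym]
    congr 1
    push_cast
    field_simp
end

section
/- The free group $\mathbb{F}_2$ on two generators fails Reiter's condition in $\ell^1$: there exist a finite set $F \subseteq \mathbb{F}_2$ and $\varepsilon > 0$ such that for every $f \in \ell^1(\mathbb{F}_2)$ with $f \ge 0$ and $\|f\|_1 = 1$, there is $g \in F$ with $\|g \cdot f - f\|_1 \ge \varepsilon$, where $(g \cdot f)(x) = f(g^{-1}x)$. -/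
open FreeGroup

namespace Stmt8Aux

abbrev G := FreeGroup (Fin 2)

/-- The set of elements whose reduced word starts with the letter `(i, b)`. -/
def S (i : Fin 2) (b : Bool) : Set G := {x | x.toWord.head? = some (i, b)}

lemma mem_S {x : G} {i : Fin 2} {b : Bool} : x ∈ S i b ↔ x.toWord.head? = some (i, b) :=
  Iff.rfl

/-- If `y` does not start with `(i, false)`, then `of i * y` starts with `(i, true)`. -/
lemma of_mul_mem {y : G} {i : Fin 2} (hy : y ∉ S i false) : of i * y ∈ S i true := by
  have h1 : of i * y = mk ((i, true) :: y.toWord) := by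
    conv_lhs => rw [← mk_toWord (x := y)]
    rw [show (of i : G) = mk [(i, true)] from rfl, mul_mk]
    rfl
  rw [mem_S, h1, toWord_mk, reduce.cons, reduce_toWord]
  rcases hw : y.toWord with _ | ⟨⟨j, c⟩, t⟩
  · rfl
  · have hne : ¬((i, true).1 = (j, c).1 ∧ (i, true).2 = !(j, c).2) := by
      rintro ⟨h2, h3⟩
      apply hy
      rw [mem_S, hw]
      simp at h2 h3
      subst h2
      cases c
      · rfl
      · simp at h3
    simp only [hne, if_false]
    rfl

/-- If `x` starts with `(i, true)`, then `(of i)⁻¹ * x` does not start with `(i, false)`. -/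
lemma inv_mul_not_mem {x : G} {i : Fin 2} (hx : x ∈ S i true) :
    (of i)⁻¹ * x ∉ S i false := by
  rw [mem_S] at hx
  rcases hw : x.toWord with _ | ⟨p, t⟩
  · rw [hw] at hx; simp at hx
  · rw [hw] at hx
    simp only [List.head?_cons, Option.some.injEq] at hx
    subst hx
    have hred : reduce ((i, true) :: t) = (i, true) :: t := by
      rw [← hw]; exact reduce_toWord x
    have h1 : (of i)⁻¹ * x = mk ((i, false) :: (i, true) :: t) := by
      conv_lhs => rw [← mk_toWord (x := x), hw]
      rw [show ((of i : G))⁻¹ = mk [(i, false)] by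
        rw [show (of i : G) = mk [(i, true)] from rfl, inv_mk]; rfl, mul_mk]
      rfl
    have h2 : ((of i)⁻¹ * x).toWord = t := by
      rw [h1, toWord_mk, reduce.cons, hred]
      simp
    rw [mem_S, h2]
    intro ht
    rcases t with _ | ⟨q, t'⟩
    · simp at ht
    · simp only [List.head?_cons, Option.some.injEq] at ht
      subst ht
      exact reduce.not (L₂ := []) (x := i) (b := true) hred

/-- The bijection `x ↦ (of i)⁻¹ * x` from `S i true` onto `(S i false)ᶜ`. -/
def e (i : Fin 2) : S i true ≃ ((S i false)ᶜ : Set G) where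
  toFun x := ⟨(of i)⁻¹ * x, inv_mul_not_mem x.2⟩
  invFun y := ⟨of i * y, of_mul_mem y.2⟩
  left_inv x := by ext; simp
  right_inv y := by ext; simp

/-- The key estimate: `1 - f(S i false) - f(S i true) ≤ ‖(of i) • f - f‖₁`. -/
lemma key (f : G → ℝ) (hf : ∀ x, 0 ≤ f x) (hsum : HasSum f 1) (i : Fin 2) :
    1 - (∑' x : S i false, f x) - (∑' x : S i true, f x)
      ≤ ∑' x, |f ((of i)⁻¹ * x) - f x| := by
  have hS : Summable f := hsum.summable
  have h1 : Summable (fun x : G => f ((of i)⁻¹ * x)) :=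
    (Equiv.mulLeft ((of i : G)⁻¹)).summable_iff.mpr hS
  have hd : Summable (fun x : G => |f ((of i)⁻¹ * x) - f x|) := (h1.sub hS).abs
  -- restrict to S i true
  have step1 : ∑' x : S i true, |f ((of i)⁻¹ * x) - f x| ≤ ∑' x, |f ((of i)⁻¹ * x) - f x| :=
    hd.tsum_subtype_le _ _ (fun _ => abs_nonneg _)
  have hsub1 : Summable (fun x : S i true => f ((of i)⁻¹ * (x : G))) := h1.subtype _
  have hsub2 : Summable (fun x : S i true => f (x : G)) := hS.subtype _
  have step2 : |∑' x : S i true, (f ((of i)⁻¹ * x) - f x)|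
      ≤ ∑' x : S i true, |f ((of i)⁻¹ * x) - f x| := by
    simpa [Real.norm_eq_abs] using
      norm_tsum_le_tsum_norm (f := fun x : S i true => f ((of i)⁻¹ * x) - f x)
        (by simp only [Real.norm_eq_abs]; exact (hd.subtype (S i true)))
  have hmove : ∑' x : S i true, f ((of i)⁻¹ * (x : G)) = ∑' y : ((S i false)ᶜ : Set G), f y :=
    (e i).tsum_eq (fun y : ((S i false)ᶜ : Set G) => f y)
  have hcompl : ∑' x : S i false, f x + ∑' y : ((S i false)ᶜ : Set G), f y = 1 := by
    rw [hS.tsum_subtype_add_tsum_subtype_compl (S i false), hsum.tsum_eq]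
  have step3 : ∑' x : S i true, (f ((of i)⁻¹ * x) - f x)
      = (1 - ∑' x : S i false, f x) - ∑' x : S i true, f x := by
    rw [hsub1.tsum_sub hsub2, hmove]
    linarith
  calc 1 - (∑' x : S i false, f x) - (∑' x : S i true, f x)
      ≤ |∑' x : S i true, (f ((of i)⁻¹ * x) - f x)| := by
        rw [step3]; exact le_abs_self _
    _ ≤ ∑' x : S i true, |f ((of i)⁻¹ * x) - f x| := step2
    _ ≤ ∑' x, |f ((of i)⁻¹ * x) - f x| := step1

/-- The four first-letter sets have total `f`-mass at most `1`. -/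
lemma total_le (f : G → ℝ) (hf : ∀ x, 0 ≤ f x) (hsum : HasSum f 1) :
    (∑' x : S 0 true, f x) + (∑' x : S 0 false, f x)
      + (∑' x : S 1 true, f x) + (∑' x : S 1 false, f x) ≤ 1 := by
  have hS : Summable f := hsum.summable
  have hi : ∀ (i : Fin 2) (b : Bool), Summable ((S i b).indicator f) := fun i b =>
    hS.indicator _
  have hrw : ∀ (i : Fin 2) (b : Bool), ∑' x : S i b, f x = ∑' x, (S i b).indicator f x :=
    fun i b => tsum_subtype _ _
  rw [hrw, hrw, hrw, hrw, ← (hi 0 true).tsum_add (hi 0 false),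
    ← ((hi 0 true).add (hi 0 false)).tsum_add (hi 1 true),
    ← (((hi 0 true).add (hi 0 false)).add (hi 1 true)).tsum_add (hi 1 false),
    ← hsum.tsum_eq]
  refine Summable.tsum_le_tsum (fun x => ?_)
    ((((hi 0 true).add (hi 0 false)).add (hi 1 true)).add (hi 1 false)) hS
  have h0 := hf x
  rcases hx : x.toWord.head? with _ | ⟨j, b⟩
  · rw [Set.indicator_of_notMem (by simp [S, hx]),
      Set.indicator_of_notMem (by simp [S, hx]),
      Set.indicator_of_notMem (by simp [S, hx]),
      Set.indicator_of_notMem (by simp [S, hx])]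
    linarith
  · have hm : ∀ (i : Fin 2) (c : Bool), x ∈ S i c ↔ j = i ∧ b = c := by
      intro i c
      simp only [S, Set.mem_setOf_eq, hx, Option.some.injEq, Prod.mk.injEq]
    classical
    simp only [Set.indicator_apply, hm]
    fin_cases j <;> cases b <;> simp <;> linarith
end Stmt8Aux

open Stmt8Aux in
/-- The free group on two generators fails Reiter's condition in `ℓ¹`: there are a finite
set `F ⊆ F₂` and `ε > 0` such that every nonnegative norm-one `f ∈ ℓ¹(F₂)` is moved by
some `g ∈ F` at `ℓ¹`-distance at least `ε`, where `(g • f)(x) = f (g⁻¹ x)`. -/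
theorem stmt8 : ∃ (F : Finset (FreeGroup (Fin 2))) (ε : ℝ), 0 < ε ∧
    ∀ f : FreeGroup (Fin 2) → ℝ, (∀ x, 0 ≤ f x) → HasSum f 1 →
      ∃ g ∈ F, ε ≤ ∑' x, |f (g⁻¹ * x) - f x| := by
  refine ⟨{of 0, of 1}, 1/2, by norm_num, fun f hf hsum => ?_⟩
  by_contra h
  push_neg at h
  have h0 := h (of 0) (by simp)
  have h1 := h (of 1) (by simp)
  have k0 := key f hf hsum 0
  have k1 := key f hf hsum 1
  have t := total_le f hf hsum
  linarith
end

section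
/- There is no sequence (or net) $(x_i)$ in $\mathrm{prob}(\mathbb{N})$ such that $x_i - \sigma \cdot x_i \to 0$ in $\ell^1$-norm for every $\sigma \in S_\infty$; that is, the canonical affine action of $S_\infty$ on $\mathrm{prob}(\mathbb{N}) \subseteq \ell^1(\mathbb{N})$ admits no approximate fixed point net. -/
universe u

/-- The set of probability densities in `ℓ¹(ℕ)`. -/
def probSet : Set (lp (fun _ : ℕ => ℝ) 1) :=
  {b | (∀ n, 0 ≤ b n) ∧ ∑' n, b n = 1}

/-- The canonical action of `S_∞ = Perm ℕ` on `ℓ¹(ℕ)` by permuting coordinates. -/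
def permSmul (σ : Equiv.Perm ℕ) (x : lp (fun _ : ℕ => ℝ) 1) : lp (fun _ : ℕ => ℝ) 1 :=
  ⟨fun n => x (σ⁻¹ n), by
    apply memℓp_gen
    have hx : Summable fun n => ‖x n‖ ^ (1 : ENNReal).toReal :=
      (memℓp_gen_iff (by norm_num)).1 (lp.memℓp x)
    exact ((σ⁻¹ : ℕ ≃ ℕ).summable_iff
      (f := fun n => ‖x n‖ ^ (1 : ENNReal).toReal)).2 hx⟩

/-! ### Auxiliary material: explicit permutations witnessing paradoxicality of `ℕ` -/

/-- A permutation with `sigPerm m` even iff `m ≡ 0 [MOD 4]`. -/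
def sigPerm : Equiv.Perm ℕ where
  toFun n := if n % 4 = 0 then n / 2 else if n % 2 = 1 then 2*n - 1 else n + 1
  invFun n := if n % 2 = 0 then 2*n else if n % 4 = 1 then (n+1)/2 else n - 1
  left_inv n := by simp only []; split_ifs <;> omega
  right_inv n := by simp only []; split_ifs <;> omega

/-- A permutation with `tauPerm m` odd iff `m ≡ 2 [MOD 4]`. -/
def tauPerm : Equiv.Perm ℕ where
  toFun n := if n % 4 = 2 then n / 2 else if n % 2 = 1 then 2*n else n
  invFun n := if n % 4 = 2 then n / 2 else if n % 2 = 1 then 2*n else n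
  left_inv n := by simp only []; split_ifs <;> omega
  right_inv n := by simp only []; split_ifs <;> omega

/-- The parity swap `2k ↔ 2k+1`. -/
def sPerm : Equiv.Perm ℕ where
  toFun n := if n % 2 = 0 then n + 1 else n - 1
  invFun n := if n % 2 = 0 then n + 1 else n - 1
  left_inv n := by simp only []; split_ifs <;> omega
  right_inv n := by simp only []; split_ifs <;> omega

lemma sigPerm_prop (m : ℕ) : sigPerm m % 2 = 0 ↔ m % 4 = 0 := by
  simp only [sigPerm, Equiv.coe_fn_mk]; split_ifs <;> omega

lemma tauPerm_prop (m : ℕ) : tauPerm m % 2 = 1 ↔ m % 4 = 2 := by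
  simp only [tauPerm, Equiv.coe_fn_mk]; split_ifs <;> omega

lemma sigPerm'_prop (m : ℕ) : (sPerm.trans sigPerm) m % 2 = 0 ↔ m % 4 = 1 := by
  simp only [sPerm, sigPerm, Equiv.trans_apply, Equiv.coe_fn_mk]; split_ifs <;> omega

lemma tauPerm'_prop (m : ℕ) : (sPerm.trans tauPerm) m % 2 = 1 ↔ m % 4 = 3 := by
  simp only [sPerm, tauPerm, Equiv.trans_apply, Equiv.coe_fn_mk]; split_ifs <;> omega

lemma abs_summable (x : lp (fun _ : ℕ => ℝ) 1) : Summable fun n => |x n| := by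
  have hx : Summable fun n => ‖x n‖ ^ (1 : ENNReal).toReal :=
    (memℓp_gen_iff (by norm_num)).1 (lp.memℓp x)
  simpa [Real.norm_eq_abs] using hx

lemma ite_summable (p : ℕ → Prop) [DecidablePred p] (f : ℕ → ℝ)
    (hf : Summable fun n => |f n|) : Summable fun n => if p n then f n else 0 := by
  apply Summable.of_abs
  apply hf.of_nonneg_of_le (fun n => abs_nonneg _)
  intro n
  by_cases h : p n <;> simp [h]

lemma norm_formula (x y : lp (fun _ : ℕ => ℝ) 1) :
    ‖x - y‖ = ∑' n, |x n - y n| := by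
  rw [lp.norm_eq_tsum_rpow (by norm_num) _]
  simp [Real.norm_eq_abs]

/-- The key inequality: the mass on a set is at most the mass on its preimage under a
permutation, plus the ℓ¹-displacement of that permutation. -/
lemma keyineq (x : lp (fun _ : ℕ => ℝ) 1) (π : Equiv.Perm ℕ) (p : ℕ → Prop) [DecidablePred p] :
    (∑' n, if p n then x n else 0) ≤
      (∑' n, if p (π n) then x n else 0) + ‖x - permSmul π x‖ := by
  have hx : Summable fun n => |x n| := abs_summable x
  have hxπ : Summable fun n => |x (π⁻¹ n)| :=
    ((π⁻¹ : ℕ ≃ ℕ).summable_iff (f := fun n => |x n|)).2 hx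
  have hd : Summable fun n => |x n - x (π⁻¹ n)| := by
    apply (hx.add hxπ).of_nonneg_of_le (fun n => abs_nonneg _)
    intro n; exact abs_sub _ _
  have hcoe : ∀ n, (x - permSmul π x) n = x n - x (π⁻¹ n) := by
    intro n
    exact (congrFun (lp.coeFn_sub x (permSmul π x)) n).trans rfl
  have hnorm : ‖x - permSmul π x‖ = ∑' n, |x n - x (π⁻¹ n)| := by
    rw [norm_formula]
    rfl
  have h1 : (∑' n, if p n then x (π⁻¹ n) else 0) = ∑' n, if p (π n) then x n else 0 := by
    rw [← Equiv.tsum_eq (π : ℕ ≃ ℕ) (fun n => if p n then x (π⁻¹ n) else 0)]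
    congr 1; funext n
    simp
  have hsplit : (∑' n, if p n then x n else 0)
      = (∑' n, if p n then x (π⁻¹ n) else 0) + ∑' n, if p n then x n - x (π⁻¹ n) else 0 := by
    rw [← Summable.tsum_add (ite_summable p _ hxπ) (ite_summable p _ hd)]
    congr 1; funext n
    by_cases h : p n <;> simp [h]
  have hle : (∑' n, if p n then x n - x (π⁻¹ n) else 0) ≤ ∑' n, |x n - x (π⁻¹ n)| := by
    apply Summable.tsum_le_tsum _ (ite_summable p _ hd) hd
    intro n
    by_cases h : p n <;> simp [h, le_abs_self, abs_nonneg]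
  rw [hsplit, h1, hnorm]
  linarith

lemma key2 (y : lp (fun _ : ℕ => ℝ) 1) (π : Equiv.Perm ℕ) (p q : ℕ → Prop)
    [DecidablePred p] [DecidablePred q] (hpq : ∀ m, p (π m) ↔ q m)
    (hπ : ‖y - permSmul π y‖ < 1/5) :
    (∑' n, if p n then y n else 0) ≤ (∑' n, if q n then y n else 0) + 1/5 := by
  have h := keyineq y π p
  have he : (∑' n, if p (π n) then y n else 0) = ∑' n, if q n then y n else 0 :=
    tsum_congr fun n => if_congr (hpq n) rfl rfl
  rw [he] at h
  linarith

/-- The canonical affine action of `S_∞` on `prob(ℕ) ⊆ ℓ¹(ℕ)` admits no approximate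
fixed point net: there is no net `(x_i)` in `prob(ℕ)` with `x_i - σ • x_i → 0` in
`ℓ¹`-norm for every `σ ∈ S_∞`. -/
theorem stmt9 : ¬ ∃ (ι : Type u) (l : Filter ι) (x : ι → lp (fun _ : ℕ => ℝ) 1),
    l.NeBot ∧ (∀ i, x i ∈ probSet) ∧
    ∀ σ : Equiv.Perm ℕ, Filter.Tendsto (fun i => x i - permSmul σ (x i)) l (nhds 0) := by
  rintro ⟨ι, l, x, hne, hprob, htend⟩
  haveI := hne
  have hev : ∀ π : Equiv.Perm ℕ, ∀ᶠ i in l, ‖x i - permSmul π (x i)‖ < 1/5 := by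
    intro π
    have h := (htend π).norm
    rw [norm_zero] at h
    exact h.eventually (eventually_lt_nhds (by norm_num : (0:ℝ) < 1/5))
  obtain ⟨i, h1, h2, h3, h4⟩ :=
    ((hev sigPerm).and ((hev tauPerm).and
      ((hev (sPerm.trans sigPerm)).and (hev (sPerm.trans tauPerm))))).exists
  obtain ⟨hpos, hsum1⟩ := hprob i
  set y := x i with hy
  have hab : Summable fun n => |y n| := abs_summable y
  have kE0 := key2 y sigPerm (fun n => n % 2 = 0) (fun n => n % 4 = 0) sigPerm_prop h1
  have kO2 := key2 y tauPerm (fun n => n % 2 = 1) (fun n => n % 4 = 2) tauPerm_prop h2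
  have kE1 := key2 y (sPerm.trans sigPerm) (fun n => n % 2 = 0) (fun n => n % 4 = 1)
    sigPerm'_prop h3
  have kO3 := key2 y (sPerm.trans tauPerm) (fun n => n % 2 = 1) (fun n => n % 4 = 3)
    tauPerm'_prop h4
  have t1 : (∑' n, if n % 2 = 0 then y n else 0) + (∑' n, if n % 2 = 1 then y n else 0)
      = 1 := by
    rw [← Summable.tsum_add (ite_summable _ _ hab) (ite_summable _ _ hab),
      show (∑' n, ((if n % 2 = 0 then y n else 0) + if n % 2 = 1 then y n else 0))
        = ∑' n, y n from tsum_congr fun n => by split_ifs <;> first | ring1 | (exfalso; omega)]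
    exact hsum1
  have t2 : (∑' n, if n % 4 = 0 then y n else 0) + (∑' n, if n % 4 = 2 then y n else 0)
      = ∑' n, if n % 2 = 0 then y n else 0 := by
    rw [← Summable.tsum_add (ite_summable _ _ hab) (ite_summable _ _ hab)]
    exact tsum_congr fun n => by split_ifs <;> first | ring1 | (exfalso; omega)
  have t3 : (∑' n, if n % 4 = 1 then y n else 0) + (∑' n, if n % 4 = 3 then y n else 0)
      = ∑' n, if n % 2 = 1 then y n else 0 := by
    rw [← Summable.tsum_add (ite_summable _ _ hab) (ite_summable _ _ hab)]
    exact tsum_congr fun n => by split_ifs <;> first | ring1 | (exfalso; omega)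
  linarith
end

section
/- A Polish group $G$ is amenable if and only if every jointly norm-continuous affine action of $G$ on a nonempty bounded, closed, convex subset $C$ of the separable Hilbert space $\ell^2$ admits a net $(x_i)$ in $C$ with $x_i - g x_i \to 0$ in norm for every $g \in G$. -/
universe u

open Filter Topology Set

noncomputable section

abbrev Hsp : Type := lp (fun _ : ℕ => ℝ) 2


section Dir1

variable {G : Type*} [Group G] [TopologicalSpace G] [IsTopologicalGroup G] [PolishSpace G]

set_option maxHeartbeats 1000000 in
theorem dir1
    (hyp : ∀ (E : Type u) [AddCommGroup E] [Module ℝ E] [TopologicalSpace E]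
        [IsTopologicalAddGroup E] [ContinuousSMul ℝ E] [LocallyConvexSpace ℝ E] [T2Space E],
      ∀ K : Set E, K.Nonempty → IsCompact K → Convex ℝ K →
        TopologicalSpace.MetrizableSpace K →
      ∀ ρ : G → E → E, (∀ v, ρ 1 v = v) → (∀ g h v, ρ (g * h) v = ρ g (ρ h v)) →
      (∀ g, Set.MapsTo (ρ g) K K) →
      (Continuous fun p : G × K => ρ p.1 (p.2 : E)) →
      (∀ g, ∀ x ∈ K, ∀ y ∈ K, ∀ t : ℝ, t ∈ Set.Icc (0:ℝ) 1 →
        ρ g (t • x + (1 - t) • y) = t • ρ g x + (1 - t) • ρ g y) →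
      ∃ x ∈ K, ∀ g : G, ρ g x = x)
    (C : Set Hsp) (hCne : C.Nonempty) (hCbdd : Bornology.IsBounded C)
    (hCcl : IsClosed C) (hCconv : Convex ℝ C)
    (ρ : G → Hsp → Hsp) (hρ1 : ∀ v, ρ 1 v = v) (hρm : ∀ g h v, ρ (g * h) v = ρ g (ρ h v))
    (hmaps : ∀ g, Set.MapsTo (ρ g) C C)
    (hcont : Continuous fun p : G × C => ρ p.1 (p.2 : Hsp))
    (haff : ∀ g, ∀ x ∈ C, ∀ y ∈ C, ∀ t : ℝ, t ∈ Set.Icc (0:ℝ) 1 →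
        ρ g (t • x + (1 - t) • y) = t • ρ g x + (1 - t) • ρ g y) :
    ∃ (ι : Type) (l : Filter ι) (x : ι → Hsp),
        l.NeBot ∧ (∀ i, x i ∈ C) ∧
        ∀ g : G, Filter.Tendsto (fun i => x i - ρ g (x i)) l (nhds 0) := by
  classical
  obtain ⟨R, hR⟩ := hCbdd.subset_closedBall 0
  have hnormC : ∀ x ∈ C, ‖x‖ ≤ R := by
    intro x hx
    have := hR hx
    rwa [Metric.mem_closedBall, dist_zero_right] at this
  have hρcont1 : ∀ g, Continuous fun x : C => ρ g x.1 := fun g =>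
    hcont.comp (Continuous.prodMk_right g)
  have horb : ∀ x : C, Continuous fun g : G => ρ g x.1 := fun x =>
    hcont.comp (continuous_id.prodMk continuous_const)
  have hρinv : ∀ (u : G) (v : Hsp), ρ u⁻¹ (ρ u v) = v := by
    intro u v
    rw [← hρm, inv_mul_cancel, hρ1]
  -- weak convergence of sequences in Hsp
  set W : (ℕ → Hsp) → Hsp → Prop := fun zs z =>
    ∀ y : Hsp, Tendsto (fun n => (inner ℝ (zs n) y : ℝ)) atTop (𝓝 (inner ℝ z y)) with hWdef
  -- Mazur: weak limits lie in closures of convex hulls of tails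
  have hcl : ∀ (cs : ℕ → Hsp), (∀ n, cs n ∈ C) → ∀ z ∈ C, W cs z → ∀ m : ℕ,
      z ∈ closure (convexHull ℝ (cs '' Set.Ici m)) := by
    intro cs hcs z hz hWz m
    by_contra hnot
    obtain ⟨f, v, hfa, hfz⟩ := geometric_hahn_banach_closed_point
      ((convex_convexHull ℝ _).closure) isClosed_closure hnot
    set cf := (InnerProductSpace.toDual ℝ Hsp).symm f with hcfdef
    have hfc : ∀ x : Hsp, f x = (inner ℝ cf x : ℝ) := fun x =>
      (InnerProductSpace.toDual_symm_apply).symm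
    have hlim : Tendsto (fun n => f (cs n)) atTop (𝓝 (f z)) := by
      have h1 := hWz cf
      have h2 : ∀ x : Hsp, f x = (inner ℝ x cf : ℝ) := fun x => by
        rw [hfc x, real_inner_comm]
      simp only [h2]
      exact h1
    have hev : ∀ᶠ n in atTop, f (cs n) ≤ v := by
      filter_upwards [Filter.eventually_ge_atTop m] with n hn
      exact (hfa _ (subset_closure (subset_convexHull ℝ _ ⟨n, hn, rfl⟩))).le
    exact absurd (le_of_tendsto hlim hev) (not_le.mpr hfz)
  -- finite convex combinations are preserved by the affine action
  have combo : ∀ (g : G) {ι' : Type} (t : Finset ι') (w : ι' → ℝ) (zf : ι' → Hsp),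
      (∀ i ∈ t, 0 ≤ w i) → (∑ i ∈ t, w i) = 1 → (∀ i ∈ t, zf i ∈ C) →
      (∑ i ∈ t, w i • zf i) ∈ C ∧ ρ g (∑ i ∈ t, w i • zf i) = ∑ i ∈ t, w i • ρ g (zf i) := by
    intro g ι' t
    induction t using Finset.induction_on with
    | empty =>
      intro w zf _ hsum _
      simp at hsum
    | @insert a s ha ih =>
      intro w zf hw hsum hzf
      have hsum' : w a + ∑ i ∈ s, w i = 1 := by rwa [Finset.sum_insert ha] at hsum
      have hwa0 : 0 ≤ w a := hw a (Finset.mem_insert_self a s)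
      have hs0 : (0:ℝ) ≤ ∑ i ∈ s, w i :=
        Finset.sum_nonneg (fun i hi => hw i (Finset.mem_insert_of_mem hi))
      have hwa1 : w a ≤ 1 := by linarith
      rcases eq_or_lt_of_le hwa1 with heq | hlt
      · -- w a = 1, all the other weights vanish
        have hzero : ∀ i ∈ s, w i = 0 := by
          have : ∑ i ∈ s, w i = 0 := by linarith
          exact (Finset.sum_eq_zero_iff_of_nonneg
            (fun i hi => hw i (Finset.mem_insert_of_mem hi))).mp this
        have h1 : (∑ i ∈ insert a s, w i • zf i) = zf a := by
          rw [Finset.sum_insert ha, heq, one_smul,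
            Finset.sum_eq_zero (fun i hi => by rw [hzero i hi, zero_smul]), add_zero]
        have h2 : (∑ i ∈ insert a s, w i • ρ g (zf i)) = ρ g (zf a) := by
          rw [Finset.sum_insert ha, heq, one_smul,
            Finset.sum_eq_zero (fun i hi => by rw [hzero i hi, zero_smul]), add_zero]
        rw [h1, h2]
        exact ⟨hzf a (Finset.mem_insert_self a s), rfl⟩
      · -- w a < 1
        have h1τ : (0:ℝ) < 1 - w a := by linarith
        set w' : ι' → ℝ := fun i => w i / (1 - w a) with hw'def
        have hw'sum : ∑ i ∈ s, w' i = 1 := by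
          rw [hw'def]
          rw [← Finset.sum_div]
          field_simp
          linarith
        have hw'0 : ∀ i ∈ s, 0 ≤ w' i := fun i hi =>
          div_nonneg (hw i (Finset.mem_insert_of_mem hi)) h1τ.le
        obtain ⟨hqC, hqρ⟩ := ih w' zf hw'0 hw'sum (fun i hi => hzf i (Finset.mem_insert_of_mem hi))
        set q := ∑ i ∈ s, w' i • zf i with hqdef
        have hwr : ∀ i ∈ s, w i = (1 - w a) * w' i := by
          intro i hi
          rw [hw'def]
          field_simp
        have hrest : (∑ i ∈ s, w i • zf i) = (1 - w a) • q := by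
          rw [hqdef, Finset.smul_sum]
          apply Finset.sum_congr rfl
          intro i hi
          rw [hwr i hi, mul_smul]
        have hrestρ : (∑ i ∈ s, w i • ρ g (zf i)) = (1 - w a) • (∑ i ∈ s, w' i • ρ g (zf i)) := by
          rw [Finset.smul_sum]
          apply Finset.sum_congr rfl
          intro i hi
          rw [hwr i hi, mul_smul]
        have htot : (∑ i ∈ insert a s, w i • zf i) = w a • zf a + (1 - w a) • q := by
          rw [Finset.sum_insert ha, hrest]
        have hIcc : w a ∈ Set.Icc (0:ℝ) 1 := ⟨hwa0, hwa1⟩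
        have hmemC : w a • zf a + (1 - w a) • q ∈ C :=
          hCconv (hzf a (Finset.mem_insert_self a s)) hqC hwa0 (by linarith) (by ring)
        constructor
        · rw [htot]; exact hmemC
        · rw [htot, haff g (zf a) (hzf a (Finset.mem_insert_self a s)) q hqC (w a) hIcc,
            Finset.sum_insert ha, hrestρ, hqρ]
  -- weak sequential continuity of each ρ g on C (Mazur's argument)
  have mazur : ∀ (g : G) (cs : ℕ → Hsp), (∀ n, cs n ∈ C) → ∀ z ∈ C, W cs z →
      W (fun n => ρ g (cs n)) (ρ g z) := by
    intro g cs hcs z hz hWz y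
    apply Filter.tendsto_of_subseq_tendsto
    intro ns hns
    have hRnn : 0 ≤ R := le_trans (norm_nonneg _) (hnormC _ hCne.some_mem)
    have hbv : ∀ n, (inner ℝ (ρ g (cs (ns n))) y : ℝ) ∈ Set.Icc (-(R * ‖y‖)) (R * ‖y‖) := by
      intro n
      have hmem : ρ g (cs (ns n)) ∈ C := hmaps g (hcs (ns n))
      have h1 : |(inner ℝ (ρ g (cs (ns n))) y : ℝ)| ≤ R * ‖y‖ := by
        refine le_trans (abs_real_inner_le_norm _ _) ?_
        exact mul_le_mul_of_nonneg_right (hnormC _ hmem) (norm_nonneg _)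
      exact abs_le.mp h1
    obtain ⟨L, _, ms, hms, hmsT⟩ := isCompact_Icc.tendsto_subseq hbv
    refine ⟨ms, ?_⟩
    set ks : ℕ → ℕ := fun k => ns (ms k) with hksdef
    have hks : Tendsto ks atTop atTop := hns.comp hms.tendsto_atTop
    set bs : ℕ → Hsp := fun k => cs (ks k) with hbsdef
    have hbsC : ∀ k, bs k ∈ C := fun k => hcs (ks k)
    have hWbs : W bs z := by
      intro y'
      exact (hWz y').comp hks
    have hβ : Tendsto (fun k => (inner ℝ (ρ g (bs k)) y : ℝ)) atTop (𝓝 L) := hmsT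
    -- show L = inner ℝ (ρ g z) y
    have key : ∀ ε : ℝ, 0 < ε → |(inner ℝ (ρ g z) y : ℝ) - L| ≤ ε := by
      intro ε hε
      obtain ⟨m, hm⟩ : ∃ m, ∀ k, m ≤ k → |(inner ℝ (ρ g (bs k)) y : ℝ) - L| ≤ ε := by
        have := Metric.tendsto_atTop.mp hβ ε hε
        obtain ⟨m, hm⟩ := this
        exact ⟨m, fun k hk => by
          have := hm k hk
          rw [Real.dist_eq] at this
          exact this.le⟩
      have hzcl : z ∈ closure (convexHull ℝ (bs '' Set.Ici m)) := hcl bs hbsC z hz hWbs m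
      -- approximating sequence from the convex hull
      have hyj : ∀ j : ℕ, ∃ p ∈ convexHull ℝ (bs '' Set.Ici m), dist z p < 1/(j+1) := by
        intro j
        exact Metric.mem_closure_iff.mp hzcl _ (by positivity)
      choose yj hyjmem hyjdist using hyj
      have hyjC : ∀ j, yj j ∈ C := fun j =>
        convexHull_min (by
          rintro p ⟨k, _, rfl⟩
          exact hbsC k) hCconv (hyjmem j)
      have hdist2 : ∀ j : ℕ, dist (yj j) z ≤ 1/(j+1) := fun j => by
        rw [dist_comm]; exact (hyjdist j).le
      have hyjz : Tendsto yj atTop (𝓝 z) := by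
        rw [tendsto_iff_dist_tendsto_zero]
        exact squeeze_zero (fun j => dist_nonneg) hdist2
          tendsto_one_div_add_atTop_nhds_zero_nat
      have hinC : Tendsto (fun j => (inner ℝ (ρ g (yj j)) y : ℝ)) atTop
          (𝓝 (inner ℝ (ρ g z) y)) := by
        have h1 : Tendsto (fun j => (⟨yj j, hyjC j⟩ : C)) atTop (𝓝 ⟨z, hz⟩) :=
          tendsto_subtype_rng.mpr hyjz
        have h2 : Tendsto (fun j => ρ g (yj j)) atTop (𝓝 (ρ g z)) :=
          ((hρcont1 g).continuousAt.tendsto).comp h1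
        exact h2.inner tendsto_const_nhds
      have hbound : ∀ j, (inner ℝ (ρ g (yj j)) y : ℝ) ∈ Set.Icc (L - ε) (L + ε) := by
        intro j
        have hmem := hyjmem j
        rw [convexHull_eq] at hmem
        obtain ⟨ι', t, w, zf, hw0, hw1, hzf, hcm⟩ := hmem
        have hzfC : ∀ i ∈ t, zf i ∈ C := by
          intro i hi
          obtain ⟨k, _, hk2⟩ := hzf i hi
          rw [← hk2]
          exact hbsC k
        have hsum := (combo g t w zf hw0 hw1 hzfC).2
        have hcm' : yj j = ∑ i ∈ t, w i • zf i := by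
          rw [← hcm, Finset.centerMass_eq_of_sum_1 _ _ hw1]
        have hval : (inner ℝ (ρ g (yj j)) y : ℝ) = ∑ i ∈ t, w i * (inner ℝ (ρ g (zf i)) y : ℝ) := by
          rw [hcm', hsum, sum_inner]
          apply Finset.sum_congr rfl
          intro i _
          rw [real_inner_smul_left]
        have hterm : ∀ i ∈ t, (inner ℝ (ρ g (zf i)) y : ℝ) ∈ Set.Icc (L - ε) (L + ε) := by
          intro i hi
          obtain ⟨k, hk1, hk2⟩ := hzf i hi
          rw [← hk2]
          have := hm k hk1
          constructor <;> [linarith [abs_le.mp this]; linarith [(abs_le.mp this).2]]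
        rw [hval]
        constructor
        · calc L - ε = ∑ i ∈ t, w i * (L - ε) := by rw [← Finset.sum_mul, hw1, one_mul]
            _ ≤ ∑ i ∈ t, w i * (inner ℝ (ρ g (zf i)) y : ℝ) :=
              Finset.sum_le_sum (fun i hi =>
                mul_le_mul_of_nonneg_left (hterm i hi).1 (hw0 i hi))
        · calc ∑ i ∈ t, w i * (inner ℝ (ρ g (zf i)) y : ℝ)
              ≤ ∑ i ∈ t, w i * (L + ε) :=
              Finset.sum_le_sum (fun i hi =>
                mul_le_mul_of_nonneg_left (hterm i hi).2 (hw0 i hi))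
            _ = L + ε := by rw [← Finset.sum_mul, hw1, one_mul]
      have hfinal : (inner ℝ (ρ g z) y : ℝ) ∈ Set.Icc (L - ε) (L + ε) :=
        isClosed_Icc.mem_of_tendsto hinC (Filter.Eventually.of_forall hbound)
      rw [abs_sub_le_iff]
      constructor <;> [linarith [hfinal.2]; linarith [hfinal.1]]
    have hLeq : L = (inner ℝ (ρ g z) y : ℝ) := by
      by_contra hne
      have h0 : 0 < |(inner ℝ (ρ g z) y : ℝ) - L| := by
        rw [abs_pos, sub_ne_zero]
        exact fun h => hne h.symm
      have := key (|(inner ℝ (ρ g z) y : ℝ) - L| / 2) (by linarith)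
      linarith
    rw [hLeq] at hβ
    exact hβ
  -- coordinate vectors of ℓ²
  set en : ℕ → Hsp := fun i => lp.single 2 i (1:ℝ) with hendef
  have hinner_en : ∀ (f : Hsp) (i : ℕ), (inner ℝ f (en i) : ℝ) = (f : ∀ _ : ℕ, ℝ) i := by
    intro f i
    rw [hendef]
    have h1 := lp.inner_single_right (𝕜 := ℝ) (G := fun _ : ℕ => ℝ) i (1:ℝ) f
    rw [h1, RCLike.inner_apply]
    simp
  have hcoord_ext : ∀ f g' : Hsp, (∀ i, (inner ℝ f (en i) : ℝ) = inner ℝ g' (en i)) → f = g' := by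
    intro f g' h
    apply lp.ext
    funext i
    have h2 := h i
    rwa [hinner_en, hinner_en] at h2
  -- the weak bilinear pairing on ULift ℓ²
  set BL : ULift.{u} Hsp →ₗ[ℝ] Hsp →ₗ[ℝ] ℝ :=
    (innerₗ Hsp).comp (ULift.moduleEquiv.toLinearMap) with hBLdef
  have hBLapp : ∀ (x : ULift.{u} Hsp) (y : Hsp), BL x y = (inner ℝ x.down y : ℝ) := fun x y => rfl
  have hBinj : Function.Injective ⇑BL := by
    intro x y h
    apply ULift.down_injective
    apply ext_inner_right ℝ
    intro v
    have h2 := LinearMap.congr_fun h v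
    rwa [hBLapp, hBLapp] at h2
  -- the compact convex set K in the weak space
  set upW : Hsp → WeakBilin BL := fun c => ULift.up c with hupWdef
  set K : Set (WeakBilin BL) := upW '' C with hKdef
  have hdownC : ∀ x : WeakBilin BL, x ∈ K → (ULift.down x) ∈ C := by
    rintro x ⟨c, hc, rfl⟩; exact hc
  have hKne : K.Nonempty := ⟨upW hCne.some, hCne.some, hCne.some_mem, rfl⟩
  have hKcomp : IsCompact K := by
    rw [(WeakBilin.isEmbedding hBinj).toIsInducing.isCompact_iff]
    have himg : (fun (x : WeakBilin BL) (y : Hsp) => BL x y) '' K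
        = (fun (c : Hsp) => fun y : Hsp => (inner ℝ c y : ℝ)) '' C := by
      rw [hKdef, Set.image_image]
      congr 1
    rw [himg]
    set S := (fun (c : Hsp) => fun y : Hsp => (inner ℝ c y : ℝ)) '' C with hSdef
    have hSsub : S ⊆ {x : Hsp → ℝ | ∀ y : Hsp, x y ∈ Set.Icc (-(R * ‖y‖)) (R * ‖y‖)} := by
      rintro _ ⟨c, hc, rfl⟩
      intro y
      have h3 : |(inner ℝ c y : ℝ)| ≤ R * ‖y‖ :=
        le_trans (abs_real_inner_le_norm _ _)
          (mul_le_mul_of_nonneg_right (hnormC c hc) (norm_nonneg _))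
      exact abs_le.mp h3
    have hSclosed : IsClosed S := by
      apply isClosed_of_closure_subset
      intro f hf
      have hmem : ∀ (A : Set (Hsp → ℝ)), IsClosed A → S ⊆ A → f ∈ A := fun A hA hSA =>
        closure_minimal hSA hA hf
      have hadd : ∀ y z : Hsp, f (y + z) = f y + f z := by
        intro y z
        exact hmem {h | h (y+z) = h y + h z}
          (isClosed_eq (continuous_apply _) ((continuous_apply y).add (continuous_apply z)))
          (by rintro _ ⟨c, hc, rfl⟩; exact inner_add_right c y z)
      have hsmul : ∀ (a : ℝ) (y : Hsp), f (a • y) = a * f y := by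
        intro a y
        exact hmem {h | h (a • y) = a * h y}
          (isClosed_eq (continuous_apply _) (continuous_const.mul (continuous_apply _)))
          (by rintro _ ⟨c, hc, rfl⟩; exact real_inner_smul_right c y a)
      have hbdd : ∀ y : Hsp, |f y| ≤ R * ‖y‖ := by
        intro y
        have h4 := hmem {h | h y ∈ Set.Icc (-(R * ‖y‖)) (R * ‖y‖)}
          ((isClosed_Icc).preimage (continuous_apply y)) (fun _ hs => hSsub hs y)
        exact abs_le.mpr h4
      set Flin : Hsp →ₗ[ℝ] ℝ :=
        { toFun := f, map_add' := hadd, map_smul' := fun a y => hsmul a y } with hFlin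
      set F : Hsp →L[ℝ] ℝ := LinearMap.mkContinuous Flin R (fun y => by
        rw [Real.norm_eq_abs]; exact hbdd y) with hFdef
      set cF := (InnerProductSpace.toDual ℝ Hsp).symm F with hcFdef
      have hcF : ∀ y, (inner ℝ cF y : ℝ) = f y := fun y => InnerProductSpace.toDual_symm_apply
      have hcFC : cF ∈ C := by
        by_contra hnot
        obtain ⟨gf, v, hga, hgc⟩ := geometric_hahn_banach_closed_point hCconv hCcl hnot
        set zg := (InnerProductSpace.toDual ℝ Hsp).symm gf with hzgdef
        have hzg : ∀ x, (inner ℝ zg x : ℝ) = gf x := fun x => InnerProductSpace.toDual_symm_apply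
        have hfA : f ∈ {h : Hsp → ℝ | h zg ≤ v} := by
          apply hmem _ (isClosed_le (continuous_apply zg) continuous_const)
          rintro _ ⟨c, hc, rfl⟩
          show (inner ℝ c zg : ℝ) ≤ v
          rw [real_inner_comm, hzg]
          exact (hga c hc).le
        have h2 : f zg = gf cF := by rw [← hcF zg, real_inner_comm, hzg]
        rw [Set.mem_setOf_eq, h2] at hfA
        exact absurd hfA (not_le.mpr hgc)
      exact ⟨cF, hcFC, funext (fun y => hcF y)⟩
    exact IsCompact.of_isClosed_subset (isCompact_pi_infinite (fun y => isCompact_Icc))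
      hSclosed hSsub
  haveI hT2W : T2Space (WeakBilin BL) := (WeakBilin.isEmbedding hBinj).t2Space
  have hKconvW : Convex ℝ K := by
    rintro _ ⟨p, hp, rfl⟩ _ ⟨q, hq, rfl⟩ s t hs ht hst
    exact ⟨s • p + t • q, hCconv hp hq hs ht hst, rfl⟩
  haveI hKcptSp : CompactSpace K := isCompact_iff_compactSpace.mp hKcomp
  have hKmet : TopologicalSpace.MetrizableSpace K := by
    have hjc : Continuous (fun x : K => fun i : ℕ => BL x.1 (en i)) :=
      continuous_pi (fun i => (WeakBilin.eval_continuous BL (en i)).comp continuous_subtype_val)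
    have hjinj : Function.Injective (fun x : K => fun i : ℕ => BL x.1 (en i)) := by
      intro x y h
      apply Subtype.ext
      apply ULift.down_injective
      apply hcoord_ext
      intro i
      exact congrFun h i
    exact ((hjc.isClosedEmbedding hjinj).toIsEmbedding).metrizableSpace
  haveI := hKmet
  -- tendsto characterization in the weak space
  have hTiff : ∀ {α : Type} {l : Filter α} {f : α → WeakBilin BL} {x : WeakBilin BL},
      Tendsto f l (𝓝 x) ↔ ∀ y : Hsp,
        Tendsto (fun i => (inner ℝ (ULift.down (f i)) y : ℝ)) l (𝓝 (inner ℝ (ULift.down x) y)) :=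
    fun {α l f x} => WeakBilin.tendsto_iff_forall_eval_tendsto BL hBinj
  -- the transported action
  set ρ' : G → WeakBilin BL → WeakBilin BL := fun g x => upW (ρ g (ULift.down x)) with hρ'def
  have hρ'1 : ∀ v, ρ' 1 v = v := by
    intro v
    show upW (ρ 1 (ULift.down v)) = v
    rw [hρ1]
    rfl
  have hρ'm : ∀ g h v, ρ' (g * h) v = ρ' g (ρ' h v) := by
    intro g h v
    show upW (ρ (g * h) (ULift.down v)) = upW (ρ g (ρ h (ULift.down v)))
    rw [hρm]
  have hρ'maps : ∀ g, Set.MapsTo (ρ' g) K K := by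
    rintro g _ ⟨c, hc, rfl⟩
    exact ⟨ρ g c, hmaps g hc, rfl⟩
  have hρ'aff : ∀ g, ∀ x ∈ K, ∀ y ∈ K, ∀ t : ℝ, t ∈ Set.Icc (0:ℝ) 1 →
      ρ' g (t • x + (1 - t) • y) = t • ρ' g x + (1 - t) • ρ' g y := by
    rintro g _ ⟨p, hp, rfl⟩ _ ⟨q, hq, rfl⟩ t ht
    show upW (ρ g (t • p + (1 - t) • q)) = upW (t • ρ g p + (1 - t) • ρ g q)
    rw [haff g p hp q hq t ht]
  have hcontW : Continuous fun p : G × K => ρ' p.1 (p.2 : WeakBilin BL) := by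
    letI := TopologicalSpace.upgradeIsCompletelyMetrizable G
    rw [continuous_iff_seqContinuous]
    intro pseq plim hplim
    obtain ⟨g₀, x₀⟩ := plim
    have hgs : Tendsto (fun n => (pseq n).1) atTop (𝓝 g₀) :=
      (continuous_fst.continuousAt (x := (g₀, x₀))).tendsto.comp hplim
    have hxs : Tendsto (fun n => (pseq n).2) atTop (𝓝 x₀) :=
      (continuous_snd.continuousAt (x := (g₀, x₀))).tendsto.comp hplim
    set gs : ℕ → G := fun n => (pseq n).1 with hgsdef
    set cs : ℕ → Hsp := fun n => ULift.down ((pseq n).2 : WeakBilin BL) with hcsdef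
    set c₀ : Hsp := ULift.down (x₀ : WeakBilin BL) with hc₀def
    have hcsC : ∀ n, cs n ∈ C := fun n => hdownC _ (pseq n).2.2
    have hc₀C : c₀ ∈ C := hdownC _ x₀.2
    have hWcs : W cs c₀ := by
      have h1 : Tendsto (fun n => ((pseq n).2 : WeakBilin BL)) atTop (𝓝 (x₀ : WeakBilin BL)) :=
        (continuous_subtype_val.continuousAt).tendsto.comp hxs
      exact fun y => (hTiff.mp h1) y
    set hh : ℕ → G := fun n => g₀⁻¹ * gs n with hhdef
    have hh1 : Tendsto hh atTop (𝓝 1) := by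
      have hmulc : Continuous fun x : G => g₀⁻¹ * x := continuous_const.mul continuous_id
      have h2 := (hmulc.tendsto g₀).comp hgs
      simp only [Function.comp_def, inv_mul_cancel] at h2
      exact h2
    set q : ℕ → Hsp := fun n => ρ (hh n) (cs n) with hqdef
    have hqC : ∀ n, q n ∈ C := fun n => hmaps _ (hcsC n)
    -- Baire: choose a good translation point u
    obtain ⟨u, hu⟩ : ∃ u : G, ∀ i r : ℕ, ∃ m : ℕ, u ∈ interior {gg : G | ∀ k, m ≤ k →
        |(inner ℝ (ρ gg (cs k)) (en i) : ℝ) - inner ℝ (ρ gg c₀) (en i)| ≤ 1/(r+1)} := by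
      set F : ℕ × ℕ → ℕ → Set G := fun ir m => {gg : G | ∀ k, m ≤ k →
        |(inner ℝ (ρ gg (cs k)) (en ir.1) : ℝ) - inner ℝ (ρ gg c₀) (en ir.1)| ≤ 1/(ir.2+1)} with hFdef
      have hFcl : ∀ ir m, IsClosed (F ir m) := by
        intro ir m
        have heq : F ir m = ⋂ (k : ℕ), ⋂ (_ : m ≤ k), {gg : G |
            |(inner ℝ (ρ gg (cs k)) (en ir.1) : ℝ) - inner ℝ (ρ gg c₀) (en ir.1)| ≤ 1/(ir.2+1)} := by
          ext gg
          simp [hFdef, Set.mem_iInter]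
        rw [heq]
        refine isClosed_iInter (fun k => isClosed_iInter (fun _ => ?_))
        have hc1 : Continuous fun gg : G => |(inner ℝ (ρ gg (cs k)) (en ir.1) : ℝ) -
            inner ℝ (ρ gg c₀) (en ir.1)| := by
          apply Continuous.abs
          exact (((horb ⟨cs k, hcsC k⟩).inner continuous_const)).sub
            (((horb ⟨c₀, hc₀C⟩).inner continuous_const))
        exact isClosed_le hc1 continuous_const
      have hFun : ∀ ir, (⋃ m, F ir m) = Set.univ := by
        intro ir
        ext gg
        simp only [Set.mem_iUnion, Set.mem_univ, iff_true]
        have hconv := (mazur gg cs hcsC c₀ hc₀C hWcs) (en ir.1)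
        obtain ⟨m, hm⟩ := Metric.tendsto_atTop.mp hconv (1/(ir.2+1)) (by positivity)
        refine ⟨m, fun k hk => ?_⟩
        have h3 := hm k hk
        rw [Real.dist_eq] at h3
        exact h3.le
      have hDense : Dense (⋂ ir : ℕ × ℕ, ⋃ m, interior (F ir m)) :=
        dense_iInter_of_isOpen (fun ir => isOpen_iUnion (fun m => isOpen_interior))
          (fun ir => dense_iUnion_interior_of_closed (hFcl ir) (hFun ir))
      obtain ⟨u, hu⟩ := hDense.nonempty
      refine ⟨u, fun i r => ?_⟩
      have h4 := Set.mem_iInter.mp hu (i, r)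
      obtain ⟨m, hm⟩ := Set.mem_iUnion.mp h4
      exact ⟨m, hm⟩
    -- the twisted sequence q converges weakly to c₀
    have hWq : W q c₀ := by
      have hqK : ∀ n, upW (q n) ∈ K := fun n => ⟨q n, hqC n, rfl⟩
      have hc₀K : upW c₀ ∈ K := ⟨c₀, hc₀C, rfl⟩
      set qK : ℕ → K := fun n => ⟨upW (q n), hqK n⟩ with hqKdef
      have hmain : Tendsto qK atTop (𝓝 ⟨upW c₀, hc₀K⟩) := by
        apply Filter.tendsto_of_subseq_tendsto
        intro ns hns
        obtain ⟨wK, _, ms, hms, hmsT⟩ := isCompact_univ.tendsto_subseq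
          (x := fun n => qK (ns n)) (fun n => Set.mem_univ _)
        refine ⟨ms, ?_⟩
        have hwid : wK = ⟨upW c₀, hc₀K⟩ := by
          set w : Hsp := ULift.down (wK : WeakBilin BL) with hwdef
          have hwC : w ∈ C := hdownC _ wK.2
          set ks : ℕ → ℕ := fun k => ns (ms k) with hksdef
          have hks : Tendsto ks atTop atTop := hns.comp hms.tendsto_atTop
          have hWsub : W (fun k => q (ks k)) w := by
            have h1 : Tendsto (fun k => (qK (ks k) : WeakBilin BL)) atTop
                (𝓝 (wK : WeakBilin BL)) :=
              (continuous_subtype_val.continuousAt).tendsto.comp hmsT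
            exact fun y => (hTiff.mp h1) y
          have hcoords : ∀ i : ℕ, (inner ℝ (ρ u w) (en i) : ℝ) = inner ℝ (ρ u c₀) (en i) := by
            intro i
            have hbnd : ∀ r : ℕ, |(inner ℝ (ρ u w) (en i) : ℝ) - inner ℝ (ρ u c₀) (en i)| ≤
                1/(r+1) := by
              intro r
              obtain ⟨m, hum⟩ := hu i r
              have hT1 : Tendsto (fun k => (inner ℝ (ρ u (q (ks k))) (en i) : ℝ)) atTop
                  (𝓝 (inner ℝ (ρ u w) (en i))) :=
                (mazur u (fun k => q (ks k)) (fun k => hqC (ks k)) w hwC hWsub) (en i)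
              have hT2 : Tendsto (fun k => (inner ℝ (ρ u (ρ (hh (ks k)) c₀)) (en i) : ℝ)) atTop
                  (𝓝 (inner ℝ (ρ u c₀) (en i))) := by
                have hh2 : Tendsto (fun k => hh (ks k)) atTop (𝓝 1) := hh1.comp hks
                have ho : Tendsto (fun k => ρ (hh (ks k)) c₀) atTop (𝓝 c₀) := by
                  have h5 := ((horb ⟨c₀, hc₀C⟩).continuousAt (x := 1)).tendsto.comp hh2
                  simp only [Function.comp_def] at h5
                  rwa [hρ1] at h5
                have hoC : ∀ k, ρ (hh (ks k)) c₀ ∈ C := fun k => hmaps _ hc₀C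
                have hsub : Tendsto (fun k => (⟨ρ (hh (ks k)) c₀, hoC k⟩ : C)) atTop
                    (𝓝 ⟨c₀, hc₀C⟩) := tendsto_subtype_rng.mpr ho
                have h6 := ((hρcont1 u).continuousAt).tendsto.comp hsub
                exact h6.inner tendsto_const_nhds
              have hmul : Tendsto (fun k => u * hh (ks k)) atTop (𝓝 u) := by
                have hh2 : Tendsto (fun k => hh (ks k)) atTop (𝓝 1) := hh1.comp hks
                have hmulc : Continuous fun x : G => u * x := continuous_const.mul continuous_id
                have h7 := (hmulc.tendsto (1:G)).comp hh2
                simp only [Function.comp_def, mul_one] at h7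
                exact h7
              have hevV : ∀ᶠ k in atTop, u * hh (ks k) ∈ interior {gg : G | ∀ k', m ≤ k' →
                  |(inner ℝ (ρ gg (cs k')) (en i) : ℝ) - inner ℝ (ρ gg c₀) (en i)| ≤ 1/(r+1)} :=
                hmul (isOpen_interior.mem_nhds hum)
              have hevm : ∀ᶠ k in atTop, m ≤ ks k := hks.eventually_ge_atTop m
              have hevbound : ∀ᶠ k in atTop,
                  |(inner ℝ (ρ u (q (ks k))) (en i) : ℝ) -
                    inner ℝ (ρ u (ρ (hh (ks k)) c₀)) (en i)| ≤ 1/(r+1) := by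
                filter_upwards [hevV, hevm] with k hV hm'
                have hmem := interior_subset hV (ks k) hm'
                rw [hρm u (hh (ks k)) (cs (ks k)), hρm u (hh (ks k)) c₀] at hmem
                exact hmem
              have hTdiff : Tendsto (fun k => |(inner ℝ (ρ u (q (ks k))) (en i) : ℝ) -
                  inner ℝ (ρ u (ρ (hh (ks k)) c₀)) (en i)|) atTop
                  (𝓝 |(inner ℝ (ρ u w) (en i) : ℝ) - inner ℝ (ρ u c₀) (en i)|) :=
                (hT1.sub hT2).abs
              exact le_of_tendsto hTdiff hevbound
            have h0 : |(inner ℝ (ρ u w) (en i) : ℝ) - inner ℝ (ρ u c₀) (en i)| ≤ 0 :=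
              ge_of_tendsto tendsto_one_div_add_atTop_nhds_zero_nat
                (Filter.Eventually.of_forall hbnd)
            have habs0 : |(inner ℝ (ρ u w) (en i) : ℝ) - inner ℝ (ρ u c₀) (en i)| = 0 :=
              le_antisymm h0 (abs_nonneg _)
            exact sub_eq_zero.mp (abs_eq_zero.mp habs0)
          have hww : ρ u w = ρ u c₀ := hcoord_ext _ _ hcoords
          have hwc : w = c₀ := by
            have h1 := hρinv u w
            have h2 := hρinv u c₀
            rw [← h1, ← h2, hww]
          apply Subtype.ext
          apply ULift.down_injective
          exact hwc
        rw [hwid] at hmsT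
        exact hmsT
      have h1 : Tendsto (fun n => (qK n : WeakBilin BL)) atTop (𝓝 (upW c₀)) :=
        (continuous_subtype_val.continuousAt).tendsto.comp hmain
      exact fun y => (hTiff.mp h1) y
    -- final assembly
    apply hTiff.mpr
    intro y
    have h1 := (mazur g₀ q hqC c₀ hc₀C hWq) y
    have h2 : ∀ n, ρ g₀ (q n) = ρ (gs n) (cs n) := by
      intro n
      show ρ g₀ (ρ (hh n) (cs n)) = ρ (gs n) (cs n)
      rw [← hρm]
      show ρ (g₀ * (g₀⁻¹ * gs n)) (cs n) = ρ (gs n) (cs n)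
      rw [mul_inv_cancel_left]
    rw [show (fun n => (inner ℝ (ρ g₀ (q n)) y : ℝ)) =
      fun n => (inner ℝ (ρ (gs n) (cs n)) y : ℝ) from funext (fun n => by rw [h2 n])] at h1
    exact h1
  obtain ⟨xF, hxFK, hfix⟩ := hyp (WeakBilin BL) K hKne hKcomp hKconvW hKmet
    ρ' hρ'1 hρ'm hρ'maps hcontW hρ'aff
  have hfixd : ∀ g : G, ρ g (ULift.down xF) = ULift.down xF := by
    intro g
    have h6 := congrArg ULift.down (hfix g)
    exact h6
  refine ⟨ℕ, atTop, fun _ => ULift.down xF, atTop_neBot, fun _ => hdownC xF hxFK, fun g => ?_⟩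
  rw [show (fun _ : ℕ => ULift.down xF - ρ g (ULift.down xF)) = fun _ : ℕ => 0 from
    funext (fun _ => by rw [hfixd g, sub_self])]
  exact tendsto_const_nhds


end Dir1


section Dir2

variable {G : Type*} [Group G] [TopologicalSpace G] [IsTopologicalGroup G] [PolishSpace G]

set_option maxHeartbeats 2000000 in
theorem dir2
    (hyp : ∀ C : Set Hsp, C.Nonempty → Bornology.IsBounded C →
        IsClosed C → Convex ℝ C →
      ∀ ρ : G → Hsp → Hsp,
        (∀ v, ρ 1 v = v) → (∀ g h v, ρ (g * h) v = ρ g (ρ h v)) →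
      (∀ g, Set.MapsTo (ρ g) C C) →
      (Continuous fun p : G × C => ρ p.1 (p.2 : Hsp)) →
      (∀ g, ∀ x ∈ C, ∀ y ∈ C, ∀ t : ℝ, t ∈ Set.Icc (0:ℝ) 1 →
        ρ g (t • x + (1 - t) • y) = t • ρ g x + (1 - t) • ρ g y) →
      ∃ (ι : Type) (l : Filter ι) (x : ι → Hsp),
        l.NeBot ∧ (∀ i, x i ∈ C) ∧
        ∀ g : G, Filter.Tendsto (fun i => x i - ρ g (x i)) l (nhds 0))
    (E : Type u) [AddCommGroup E] [Module ℝ E] [TopologicalSpace E]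
    [IsTopologicalAddGroup E] [ContinuousSMul ℝ E] [LocallyConvexSpace ℝ E] [T2Space E]
    (K : Set E) (hKne : K.Nonempty) (hKc : IsCompact K) (hKconv : Convex ℝ K)
    (hKmet : TopologicalSpace.MetrizableSpace K)
    (ρ : G → E → E) (hρ1 : ∀ v, ρ 1 v = v) (hρm : ∀ g h v, ρ (g * h) v = ρ g (ρ h v))
    (hmaps : ∀ g, Set.MapsTo (ρ g) K K)
    (hcont : Continuous fun p : G × K => ρ p.1 (p.2 : E))
    (haff : ∀ g, ∀ x ∈ K, ∀ y ∈ K, ∀ t : ℝ, t ∈ Set.Icc (0:ℝ) 1 →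
        ρ g (t • x + (1 - t) • y) = t • ρ g x + (1 - t) • ρ g y) :
    ∃ x ∈ K, ∀ g : G, ρ g x = x := by
  classical
  haveI : TopologicalSpace.MetrizableSpace K := hKmet
  haveI : CompactSpace K := isCompact_iff_compactSpace.mp hKc
  letI : MetricSpace K := TopologicalSpace.metrizableSpaceMetric K
  -- countable separating family of functionals on K
  obtain ⟨g0, hg0⟩ : ∃ g0 : ℕ → (E →L[ℝ] ℝ), ∀ x y : K, (∀ n, g0 n x.1 = g0 n y.1) → x = y := by
    set U : (E →L[ℝ] ℝ) → Set (K × K) := fun f => {p | f p.1.1 ≠ f p.2.1} with hU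
    have hUopen : ∀ f, IsOpen (U f) := by
      intro f
      have h1 : Continuous fun p : K × K => f p.1.1 - f p.2.1 :=
        ((f.continuous.comp continuous_subtype_val).comp continuous_fst).sub
          ((f.continuous.comp continuous_subtype_val).comp continuous_snd)
      have : U f = (fun p : K × K => f p.1.1 - f p.2.1) ⁻¹' {0}ᶜ := by
        ext p; simp [hU, sub_eq_zero]
      rw [this]
      exact (isOpen_compl_singleton).preimage h1
    obtain ⟨T, hTc, hTeq⟩ := TopologicalSpace.isOpen_iUnion_countable U hUopen
    have hTc' : (insert (0 : E →L[ℝ] ℝ) T).Countable := hTc.insert _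
    obtain ⟨g0, hg0⟩ := hTc'.exists_eq_range (insert_nonempty _ _)
    refine ⟨g0, fun x y hxy => ?_⟩
    by_contra hne
    have hval : x.1 ≠ y.1 := fun h => hne (Subtype.ext h)
    have hsub : x.1 - y.1 ≠ 0 := sub_ne_zero.mpr hval
    obtain ⟨f, hf⟩ := SeparatingDual.exists_ne_zero (R := ℝ) hsub
    have hfxy : f x.1 ≠ f y.1 := by
      intro h; apply hf; rw [map_sub, h, sub_self]
    have hmem : (x, y) ∈ ⋃ i, U i := mem_iUnion.mpr ⟨f, hfxy⟩
    rw [← hTeq] at hmem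
    obtain ⟨f', hf'T, hf'⟩ := by
      simpa only [mem_iUnion, exists_prop] using hmem
    have : f' ∈ insert (0 : E →L[ℝ] ℝ) T := mem_insert_of_mem _ hf'T
    rw [hg0] at this
    obtain ⟨n, rfl⟩ := this
    exact hf' (hxy n)
  -- bounds
  have hbound : ∀ n, ∃ Mn : ℝ, ∀ x ∈ K, ‖g0 n x‖ ≤ Mn := fun n =>
    hKc.exists_bound_of_continuousOn (g0 n).continuous.continuousOn
  choose M hM using hbound
  set c : ℕ → ℝ := fun n => (1/2 : ℝ)^n / (1 + max (M n) 0) with hc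
  have hMpos : ∀ n, (0:ℝ) < 1 + max (M n) 0 := fun n => by positivity
  have hcpos : ∀ n, 0 < c n := fun n => div_pos (by positivity) (hMpos n)
  have hkey : ∀ n, ∀ x ∈ K, ‖c n * g0 n x‖ ≤ (1/2 : ℝ)^n := by
    intro n x hx
    rw [norm_mul]
    have h1 : ‖g0 n x‖ ≤ 1 + max (M n) 0 :=
      le_trans (le_trans (hM n x hx) (le_max_left _ _)) (by linarith)
    have h2 : ‖c n‖ = c n := Real.norm_of_nonneg (hcpos n).le
    rw [h2, hc]
    calc (1/2 : ℝ)^n / (1 + max (M n) 0) * ‖g0 n x‖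
        ≤ (1/2 : ℝ)^n / (1 + max (M n) 0) * (1 + max (M n) 0) := by
          apply mul_le_mul_of_nonneg_left h1 (by positivity)
      _ = (1/2 : ℝ)^n := by field_simp
  -- the embedding φ : K → ℓ²
  have hmem2 : ∀ x : K, Memℓp (fun n => c n * g0 n x.1) 2 := by
    intro x
    apply memℓp_gen
    apply Summable.of_nonneg_of_le (fun n => by positivity)
      (fun n => ?_) (summable_geometric_of_lt_one (by norm_num) (by norm_num)
        (r := (1/4 : ℝ)))
    have h := hkey n x.1 x.2
    have h2 : ENNReal.toReal 2 = 2 := by norm_num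
    rw [h2]
    calc ‖c n * g0 n x.1‖ ^ (2:ℝ) ≤ ((1/2:ℝ)^n) ^ (2:ℝ) := by
          apply Real.rpow_le_rpow (norm_nonneg _) h (by norm_num)
      _ = (1/4 : ℝ)^n := by
          rw [← Real.rpow_natCast ((1/2:ℝ)) n, ← Real.rpow_mul (by norm_num),
            mul_comm, Real.rpow_mul (by norm_num), Real.rpow_natCast]
          norm_num
  set φ : K → Hsp := fun x => ⟨fun n => c n * g0 n x.1, hmem2 x⟩ with hφ
  have hφapp : ∀ (x : K) (n : ℕ), (φ x : ∀ _ : ℕ, ℝ) n = c n * g0 n x.1 := fun x n => rfl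
  -- injectivity
  have hφinj : Function.Injective φ := by
    intro x y h
    apply hg0 x y
    intro n
    have := congrArg (fun f : Hsp => (f : ∀ _ : ℕ, ℝ) n) h
    simp only [hφapp] at this
    exact mul_left_cancel₀ (hcpos n).ne' this
  -- affineness of φ
  have hφaff : ∀ (x y : K) (t : ℝ), t ∈ Set.Icc (0:ℝ) 1 →
      ∀ (h : t • x.1 + (1-t) • y.1 ∈ K),
      φ ⟨t • x.1 + (1-t) • y.1, h⟩ = t • φ x + (1-t) • φ y := by
    intro x y t _ h
    apply lp.ext
    funext n
    simp only [hφapp, lp.coeFn_add, lp.coeFn_smul, Pi.add_apply, Pi.smul_apply, smul_eq_mul]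
    rw [map_add, map_smul, map_smul]
    simp only [smul_eq_mul, hφapp]
    ring
  -- continuity of φ
  set e : ℕ → Hsp := fun n => lp.single 2 n (1:ℝ) with he
  have hen : ∀ n, ‖e n‖ = 1 := by
    intro n
    have := lp.norm_single (p := 2) (E := fun _ : ℕ => ℝ) (by norm_num) n (1:ℝ)
    simpa [he] using this
  have hbnd : ∀ (n : ℕ) (x : K), ‖(c n * g0 n x.1) • e n‖ ≤ (1/2:ℝ)^n := by
    intro n x
    rw [norm_smul, hen, mul_one]
    exact hkey n x.1 x.2
  have hsum : ∀ x : K, Summable fun n => (c n * g0 n x.1) • e n := fun x =>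
    Summable.of_norm (Summable.of_nonneg_of_le (fun n => norm_nonneg _) (fun n => hbnd n x)
      (summable_geometric_of_lt_one (by norm_num) (by norm_num)))
  have hψcont : Continuous (fun x : K => ∑' n, (c n * g0 n x.1) • e n) := by
    refine (tendstoUniformly_tsum
      (summable_geometric_of_lt_one (by norm_num) (by norm_num)) (fun n x => hbnd n x)).continuous ?_
    refine Filter.Frequently.of_forall (fun s => ?_)
    refine continuous_finset_sum _ (fun n _ => ?_)
    exact (continuous_const.mul ((g0 n).continuous.comp continuous_subtype_val)).smul continuous_const
  -- coordinate functionals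
  set coordL : ℕ → (Hsp →ₗ[ℝ] ℝ) := fun i =>
    { toFun := fun f => (f : ∀ _ : ℕ, ℝ) i
      map_add' := fun f g => rfl
      map_smul' := fun r f => rfl } with hcoordL
  have hcoordb : ∀ i (f : Hsp), ‖coordL i f‖ ≤ 1 * ‖f‖ := by
    intro i f
    rw [one_mul]
    exact lp.norm_apply_le_norm (by norm_num) f i
  set coord : ℕ → (Hsp →L[ℝ] ℝ) := fun i => LinearMap.mkContinuous (coordL i) 1 (hcoordb i)
    with hcoord
  have hcoordapp : ∀ i (f : Hsp), coord i f = (f : ∀ _ : ℕ, ℝ) i := fun i f => rfl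
  have hφeq : ∀ x : K, φ x = ∑' n, (c n * g0 n x.1) • e n := by
    intro x
    apply lp.ext
    funext i
    have h1 : coord i (∑' n, (c n * g0 n x.1) • e n) = ∑' n, coord i ((c n * g0 n x.1) • e n) :=
      ContinuousLinearMap.map_tsum _ (hsum x)
    have h2 : ∀ n, coord i ((c n * g0 n x.1) • e n) = if i = n then c n * g0 n x.1 else 0 := by
      intro n
      rw [map_smul]
      simp only [hcoordapp, he, smul_eq_mul]
      rw [lp.single_apply]
      by_cases hni : i = n
      · subst hni; simp
      · simp [hni]
    have h3 : (∑' n, coord i ((c n * g0 n x.1) • e n)) = c i * g0 i x.1 := by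
      rw [tsum_congr h2]
      rw [tsum_eq_single i (fun n hn => by simp [Ne.symm hn])]
      simp
    have := h1.trans h3
    simpa [hcoordapp, hφapp] using this.symm
  have hφcont : Continuous φ := by
    rw [show φ = fun x : K => ∑' n, (c n * g0 n x.1) • e n from funext hφeq]
    exact hψcont
  -- the image set
  set C' : Set Hsp := Set.range φ with hC'
  have hφmem : ∀ x : K, φ x ∈ C' := fun x => mem_range_self x
  have hC'ne : C'.Nonempty := ⟨φ ⟨hKne.some, hKne.some_mem⟩, hφmem _⟩
  have hC'comp : IsCompact C' := isCompact_range hφcont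
  have hC'conv : Convex ℝ C' := by
    intro a ha b hb s t hs ht hst
    obtain ⟨p, rfl⟩ := ha
    obtain ⟨q, rfl⟩ := hb
    have ht' : t = 1 - s := by linarith
    subst ht'
    have hmK : s • p.1 + (1-s) • q.1 ∈ K := hKconv p.2 q.2 hs (by linarith) hst
    exact ⟨⟨_, hmK⟩, hφaff p q s ⟨hs, by linarith⟩ hmK⟩
  -- homeomorphism K ≃ₜ C'
  set eqv : K ≃ C' := Equiv.ofInjective φ hφinj with heqv
  have heqvcont : Continuous fun x : K => eqv x := continuous_induced_rng.2 hφcont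
  set hom : K ≃ₜ C' := Continuous.homeoOfEquivCompactToT2 (f := eqv) heqvcont with hhom
  set ψi : C' → K := fun v => hom.symm v with hψi
  have hψicont : Continuous ψi := hom.symm.continuous
  have hψφ : ∀ x : K, ψi ⟨φ x, hφmem x⟩ = x := by
    intro x
    have h1 : (⟨φ x, hφmem x⟩ : C') = hom x := rfl
    rw [hψi]; rw [h1]
    exact hom.symm_apply_apply x
  have hφψ : ∀ v : C', φ (ψi v) = v.1 := by
    intro v
    have h1 : hom (ψi v) = v := hom.apply_symm_apply v
    have h2 : (hom (ψi v)).1 = φ (ψi v) := rfl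
    rw [← h2, h1]
  -- the transported action
  set ρX : G → K → K := fun g x => ⟨ρ g x.1, hmaps g x.2⟩ with hρX
  have hρXcont : Continuous fun q : G × K => ρX q.1 q.2 := Continuous.subtype_mk hcont _
  have hρXcont1 : ∀ g, Continuous (ρX g) := fun g =>
    hρXcont.comp (Continuous.prodMk_right g)
  set σ : G → Hsp → Hsp := fun g v => if h : v ∈ C' then φ (ρX g (ψi ⟨v, h⟩)) else v with hσ
  have hσφ : ∀ g (x : K), σ g (φ x) = φ (ρX g x) := by
    intro g x
    rw [hσ]
    simp only
    rw [dif_pos (hφmem x), hψφ]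
  have hσmem : ∀ g (v : Hsp), v ∈ C' → σ g v ∈ C' := by
    intro g v hv
    obtain ⟨x, rfl⟩ := hv
    rw [hσφ]
    exact hφmem _
  have hσ1 : ∀ v, σ 1 v = v := by
    intro v
    by_cases hv : v ∈ C'
    · obtain ⟨x, rfl⟩ := hv
      rw [hσφ]
      have : ρX 1 x = x := Subtype.ext (hρ1 x.1)
      rw [this]
    · simp only [hσ]; exact dif_neg hv
  have hσm : ∀ g h v, σ (g * h) v = σ g (σ h v) := by
    intro g h v
    by_cases hv : v ∈ C'
    · obtain ⟨x, rfl⟩ := hv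
      rw [hσφ, hσφ, hσφ]
      congr 1
      exact Subtype.ext (hρm g h x.1)
    · have h1 : σ h v = v := by simp only [hσ]; exact dif_neg hv
      have h2 : σ g v = v := by simp only [hσ]; exact dif_neg hv
      have h3 : σ (g * h) v = v := by simp only [hσ]; exact dif_neg hv
      rw [h1, h2, h3]
  have hσmaps : ∀ g, Set.MapsTo (σ g) C' C' := fun g v hv => hσmem g v hv
  have hσcont : Continuous fun p : G × C' => σ p.1 (p.2 : Hsp) := by
    have heq : (fun p : G × C' => σ p.1 (p.2 : Hsp))
        = fun p : G × C' => φ (ρX p.1 (ψi p.2)) := by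
      funext p
      rw [hσ]
      simp only
      rw [dif_pos p.2.2]
    rw [heq]
    apply hφcont.comp
    exact hρXcont.comp (continuous_fst.prodMk (hψicont.comp continuous_snd))
  have hσaff : ∀ g, ∀ x ∈ C', ∀ y ∈ C', ∀ t : ℝ, t ∈ Set.Icc (0:ℝ) 1 →
      σ g (t • x + (1 - t) • y) = t • σ g x + (1 - t) • σ g y := by
    intro g x hx y hy t htI
    obtain ⟨p, rfl⟩ := hx
    obtain ⟨q, rfl⟩ := hy
    have hmK : t • p.1 + (1-t) • q.1 ∈ K := hKconv p.2 q.2 htI.1 (by linarith [htI.2]) (by ring)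
    have hcomb : t • φ p + (1 - t) • φ q = φ ⟨t • p.1 + (1-t) • q.1, hmK⟩ :=
      (hφaff p q t htI hmK).symm
    rw [hcomb, hσφ, hσφ, hσφ]
    have hr : ρX g ⟨t • p.1 + (1-t) • q.1, hmK⟩ =
        ⟨t • (ρ g p.1) + (1-t) • (ρ g q.1), hKconv (hmaps g p.2) (hmaps g q.2) htI.1
          (by linarith [htI.2]) (by ring)⟩ := by
      apply Subtype.ext
      exact haff g p.1 p.2 q.1 q.2 t htI
    rw [hr]
    have := hφaff (ρX g p) (ρX g q) t htI (by
      exact hKconv (hmaps g p.2) (hmaps g q.2) htI.1 (by linarith [htI.2]) (by ring))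
    exact this
  -- apply the hypothesis
  obtain ⟨ι, l, xs, hl, hxs, happ⟩ := hyp C' hC'ne hC'comp.isBounded hC'comp.isClosed hC'conv
    σ hσ1 hσm hσmaps hσcont hσaff
  -- extract a fixed point from the approximate fixed point net
  set y : ι → K := fun i => ψi ⟨xs i, hxs i⟩ with hy
  set uu : ι → E := fun i => (y i).1 with huu
  haveI := hl
  haveI : (Filter.map uu l).NeBot := Filter.map_neBot
  have hle : Filter.map uu l ≤ Filter.principal K := by
    rw [Filter.le_principal_iff, Filter.mem_map]
    have : uu ⁻¹' K = Set.univ := by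
      ext i; simp [huu, (y i).2]
    rw [this]
    exact Filter.univ_mem
  obtain ⟨z, hzK, hzc⟩ := hKc.exists_clusterPt hle
  set m : Filter ι := l ⊓ Filter.comap uu (nhds z) with hm
  haveI hmNe : m.NeBot := by
    rw [hm, Filter.inf_neBot_iff]
    intro s hs t ht
    obtain ⟨w, hw, hsub⟩ := ht
    have hUs : uu '' s ∈ Filter.map uu l :=
      Filter.mem_map.mpr (Filter.mem_of_superset hs (subset_preimage_image uu s))
    have := (clusterPt_iff_nonempty.mp hzc) hw hUs
    obtain ⟨v, hv1, a, ha, rfl⟩ := this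
    exact ⟨a, ha, hsub hv1⟩
  have htendz : Filter.Tendsto uu m (nhds z) := by
    rw [hm]
    exact tendsto_iff_comap.mpr inf_le_right
  set zK : K := ⟨z, hzK⟩ with hzKdef
  have htendy : Filter.Tendsto y m (nhds zK) := by
    rw [tendsto_subtype_rng]
    exact htendz
  refine ⟨z, hzK, fun g => ?_⟩
  -- along m, xs = φ (y i) tends to φ zK and σ g (xs i) tends to φ (ρX g zK)
  have hxsy : ∀ i, xs i = φ (y i) := fun i => (hφψ ⟨xs i, hxs i⟩).symm
  have ht1 : Filter.Tendsto (fun i => xs i) m (nhds (φ zK)) := by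
    rw [show (fun i => xs i) = fun i => φ (y i) from funext hxsy]
    exact (hφcont.continuousAt.tendsto).comp htendy
  have ht2 : Filter.Tendsto (fun i => σ g (xs i)) m (nhds (φ (ρX g zK))) := by
    have : ∀ i, σ g (xs i) = φ (ρX g (y i)) := by
      intro i; rw [hxsy i, hσφ]
    rw [show (fun i => σ g (xs i)) = fun i => φ (ρX g (y i)) from funext this]
    exact ((hφcont.comp (hρXcont1 g)).continuousAt.tendsto).comp htendy
  have ht3 : Filter.Tendsto (fun i => xs i - σ g (xs i)) m (nhds (φ zK - φ (ρX g zK))) :=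
    ht1.sub ht2
  have ht4 : Filter.Tendsto (fun i => xs i - σ g (xs i)) m (nhds 0) :=
    (happ g).mono_left inf_le_left
  have hzero : φ zK - φ (ρX g zK) = 0 := tendsto_nhds_unique ht3 ht4
  have : zK = ρX g zK := hφinj (sub_eq_zero.mp hzero)
  have := congrArg Subtype.val this
  exact this.symm

end Dir2

/-- A Polish group is amenable (expressed, via Day's theorem, as the fixed point property
for continuous affine actions on nonempty compact convex metrizable subsets of locally
convex spaces) if and only if every jointly norm-continuous affine action of it on a
nonempty bounded closed convex subset of the Hilbert space `ℓ²` admits an approximate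
fixed point net. -/
theorem stmt11 {G : Type*} [Group G] [TopologicalSpace G] [IsTopologicalGroup G]
    [PolishSpace G] :
    (∀ (E : Type u) [AddCommGroup E] [Module ℝ E] [TopologicalSpace E]
        [IsTopologicalAddGroup E] [ContinuousSMul ℝ E] [LocallyConvexSpace ℝ E] [T2Space E],
      ∀ K : Set E, K.Nonempty → IsCompact K → Convex ℝ K →
        TopologicalSpace.MetrizableSpace K →
      ∀ ρ : G → E → E, (∀ v, ρ 1 v = v) → (∀ g h v, ρ (g * h) v = ρ g (ρ h v)) →
      (∀ g, Set.MapsTo (ρ g) K K) →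
      (Continuous fun p : G × K => ρ p.1 (p.2 : E)) →
      (∀ g, ∀ x ∈ K, ∀ y ∈ K, ∀ t : ℝ, t ∈ Set.Icc (0:ℝ) 1 →
        ρ g (t • x + (1 - t) • y) = t • ρ g x + (1 - t) • ρ g y) →
      ∃ x ∈ K, ∀ g : G, ρ g x = x)
    ↔
    (∀ C : Set (lp (fun _ : ℕ => ℝ) 2), C.Nonempty → Bornology.IsBounded C →
        IsClosed C → Convex ℝ C →
      ∀ ρ : G → lp (fun _ : ℕ => ℝ) 2 → lp (fun _ : ℕ => ℝ) 2,
        (∀ v, ρ 1 v = v) → (∀ g h v, ρ (g * h) v = ρ g (ρ h v)) →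
      (∀ g, Set.MapsTo (ρ g) C C) →
      (Continuous fun p : G × C => ρ p.1 (p.2 : lp (fun _ : ℕ => ℝ) 2)) →
      (∀ g, ∀ x ∈ C, ∀ y ∈ C, ∀ t : ℝ, t ∈ Set.Icc (0:ℝ) 1 →
        ρ g (t • x + (1 - t) • y) = t • ρ g x + (1 - t) • ρ g y) →
      ∃ (ι : Type) (l : Filter ι) (x : ι → lp (fun _ : ℕ => ℝ) 2),
        l.NeBot ∧ (∀ i, x i ∈ C) ∧
        ∀ g : G, Filter.Tendsto (fun i => x i - ρ g (x i)) l (nhds 0)) := by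
  exact ⟨fun h => dir1 h, fun h => dir2 h⟩

end
end

section
/- Let $G$ be a locally compact group, $\lambda$ a left Haar measure, $C$ a complete bounded convex subset of a locally convex space $X$ on which $G$ acts continuously by affine maps, $x \in C$, and $F \subseteq G$ a compact set of positive measure with barycenter $x_F = \frac{1}{\lambda(F)} \int_F g \cdot x \, d\lambda(g)$. Then for every $\gamma \in G$ and every continuous seminorm $q$ on $X$, $q(x_F - \gamma \cdot x_F) \le \frac{\lambda(\gamma F \triangle F)}{\lambda(F)} \cdot \sup_{v \in G} q(v \cdot x)$, and the supremum is finite since $C$ is bounded. -/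
open scoped symmDiff Pointwise

open MeasureTheory

section Aux
open Set Filter Bornology

lemma aux_bound {X : Type*} [AddCommGroup X] [TopologicalSpace X] [Module ℝ X]
    {C : Set X} (hbdd : Bornology.IsVonNBounded ℝ C)
    (q : X → ℝ) (hs : ∀ (c : ℝ) (z : X), q (c • z) = ‖c‖ * q z)
    (hq : Continuous q) (h0 : q 0 = 0) : ∃ B : ℝ, ∀ c ∈ C, q c ≤ B := by
  have hVopen : IsOpen {z : X | q z < 1} := isOpen_lt hq continuous_const
  have hV : {z : X | q z < 1} ∈ nhds (0 : X) := hVopen.mem_nhds (by simp [h0])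
  obtain ⟨a, ha⟩ := (hbdd hV).eventually.exists
  refine ⟨‖a‖, fun c hc => ?_⟩
  obtain ⟨v, hv, rfl⟩ := ha hc
  calc q (a • v) = ‖a‖ * q v := hs a v
    _ ≤ ‖a‖ * 1 := mul_le_mul_of_nonneg_left hv.le (norm_nonneg a)
    _ = ‖a‖ := mul_one _

lemma aux_null {α : Type*} [MeasurableSpace α] (μ : Measure α)
    {S S' : Set α} (hSS : S ⊆ S') (hμ : μ S' ≤ μ S) (hfin : μ S' ≠ ⊤)
    {T : Set α} (hTm : MeasurableSet T) (hTS : T ⊆ S') (hTint : T ∩ S = ∅) :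
    μ T = 0 := by
  by_contra hT0
  have h1 : S ⊆ S' \ T := fun a ha =>
    ⟨hSS ha, fun hT => (Set.eq_empty_iff_forall_notMem.1 hTint a ⟨hT, ha⟩)⟩
  have h2 : μ S' = μ (S' \ T) + μ T := by
    rw [← measure_union (disjoint_sdiff_left) hTm, Set.diff_union_of_subset hTS]
  have h3 : μ (S' \ T) < μ (S' \ T) + μ T :=
    ENNReal.lt_add_right (ne_top_of_le_ne_top hfin (measure_mono Set.diff_subset)) hT0
  have h4 : μ S' ≤ μ (S' \ T) := hμ.trans (measure_mono h1)
  rw [h2] at h4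
  exact absurd h4 (not_le.mpr h3)

lemma aux_hull {α : Type*} [MeasurableSpace α] (μ : Measure α)
    {A B A' B' : Set α} (hA : A ⊆ A') (hB : B ⊆ B')
    (hA'm : MeasurableSet A') (hB'm : MeasurableSet B')
    (hμA : μ A' ≤ μ A) (hμB : μ B' ≤ μ B)
    (hAfin : μ A' ≠ ⊤) (hBfin : μ B' ≠ ⊤) :
    μ (A' ∆ B') ≤ μ (A ∆ B) := by
  set W := toMeasurable μ (A ∆ B) with hW
  have hWsub : A ∆ B ⊆ W := subset_toMeasurable μ _
  have hWm : MeasurableSet W := measurableSet_toMeasurable μ _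
  have hμW : μ W = μ (A ∆ B) := measure_toMeasurable _
  have hT1 : μ ((A' \ B') \ W) = 0 := by
    refine aux_null μ hA hμA hAfin ((hA'm.diff hB'm).diff hWm) (fun a ha => ha.1.1) ?_
    ext a
    simp only [Set.mem_inter_iff, Set.mem_empty_iff_false, iff_false, not_and]
    rintro ⟨⟨haA', haB'⟩, haW⟩ haA
    exact haW (hWsub (Set.mem_symmDiff.mpr (Or.inl ⟨haA, fun hb => haB' (hB hb)⟩)))
  have hT2 : μ ((B' \ A') \ W) = 0 := by
    refine aux_null μ hB hμB hBfin ((hB'm.diff hA'm).diff hWm) (fun a ha => ha.1.1) ?_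
    ext a
    simp only [Set.mem_inter_iff, Set.mem_empty_iff_false, iff_false, not_and]
    rintro ⟨⟨haB', haA'⟩, haW⟩ haB
    exact haW (hWsub (Set.mem_symmDiff.mpr (Or.inr ⟨haB, fun hb => haA' (hA hb)⟩)))
  have hsub : A' ∆ B' ⊆ W ∪ (((A' \ B') \ W) ∪ ((B' \ A') \ W)) := by
    intro a ha
    by_cases haW : a ∈ W
    · exact Or.inl haW
    · rcases Set.mem_symmDiff.mp ha with h | h
      · exact Or.inr (Or.inl ⟨⟨h.1, h.2⟩, haW⟩)
      · exact Or.inr (Or.inr ⟨⟨h.1, h.2⟩, haW⟩)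
  calc μ (A' ∆ B') ≤ μ (W ∪ (((A' \ B') \ W) ∪ ((B' \ A') \ W))) := measure_mono hsub
    _ ≤ μ W + μ (((A' \ B') \ W) ∪ ((B' \ A') \ W)) := measure_union_le _ _
    _ ≤ μ W + (μ ((A' \ B') \ W) + μ ((B' \ A') \ W)) := by gcongr; exact measure_union_le _ _
    _ = μ (A ∆ B) := by rw [hT1, hT2, hμW]; simp

lemma aux_hb {X : Type*} [AddCommGroup X] [TopologicalSpace X] [IsTopologicalAddGroup X]
    [Module ℝ X] (q : Seminorm ℝ X) (hq : Continuous q) (y : X) :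
    ∃ φ : X →L[ℝ] ℝ, φ y = q y ∧ ∀ z, |φ z| ≤ q z := by
  have H : ∀ c : ℝ, c • y = 0 → c • (q y : ℝ) = 0 := by
    intro c hc
    have : ‖c‖ * q y = 0 := by rw [← map_smul_eq_mul q, hc, map_zero]
    rcases mul_eq_zero.mp this with h | h
    · rw [smul_eq_mul, norm_eq_zero.mp h, zero_mul]
    · rw [smul_eq_mul, h, mul_zero]
  set f0 := LinearPMap.mkSpanSingleton' (σ := RingHom.id ℝ) y (q y : ℝ) H with hf0
  have hdom : f0.domain = (Submodule.span ℝ {y}) := rfl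
  have hfN : ∀ z : f0.domain, f0 z ≤ q z := by
    rintro ⟨z, hz⟩
    obtain ⟨c, rfl⟩ := Submodule.mem_span_singleton.mp hz
    have := LinearPMap.mkSpanSingleton'_apply (σ := RingHom.id ℝ) y (q y : ℝ) H c hz
    rw [this, smul_eq_mul, map_smul_eq_mul]
    exact mul_le_mul_of_nonneg_right (le_abs_self c) (apply_nonneg q y)
  obtain ⟨g, hg1, hg2⟩ := exists_extension_of_le_sublinear f0 q
    (fun c hc z => by rw [map_smul_eq_mul, Real.norm_eq_abs, abs_of_pos hc])
    (map_add_le_add q) hfN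
  have hgy : g y = q y := by
    have hy : y ∈ f0.domain := by
      rw [hdom]; exact Submodule.mem_span_singleton_self y
    have h1 := hg1 ⟨y, hy⟩
    have h2 : f0 ⟨y, hy⟩ = q y := LinearPMap.mkSpanSingleton'_apply_self (σ := RingHom.id ℝ) y (q y : ℝ) H hy
    rw [h1, h2]
  have habs : ∀ z, |g z| ≤ q z := by
    intro z
    refine abs_le.mpr ⟨?_, hg2 z⟩
    have := hg2 (-z)
    rw [map_neg, map_neg_eq_map q] at this
    linarith
  have hgc : Continuous g := by
    have h0 : Filter.Tendsto g (nhds 0) (nhds 0) := by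
      refine squeeze_zero_norm (fun z => by simpa [Real.norm_eq_abs] using habs z) ?_
      simpa [map_zero] using hq.tendsto 0
    apply continuous_of_continuousAt_zero g.toAddMonoidHom
    simpa [ContinuousAt, map_zero] using h0
  exact ⟨⟨g, hgc⟩, hgy, habs⟩

end Aux

/-- For a jointly continuous affine action of a locally compact group `G` on a complete
bounded convex subset `C` of a locally convex space, `x ∈ C`, and a compact `F ⊆ G` of
positive Haar measure, the barycenter `x_F ∈ C` (characterized weakly by
`φ x_F = (μ F)⁻¹ ∫_F φ (g • x) dμ` for all continuous functionals `φ`) satisfies, for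
every `γ ∈ G` and every continuous seminorm `q`,
`q (x_F - γ • x_F) ≤ (μ(γF ∆ F)/μ F) ⬝ sup_v q (v • x)`, the supremum being finite
since `C` is bounded. -/
theorem stmt14 {G : Type*} [Group G] [TopologicalSpace G] [IsTopologicalGroup G]
    [LocallyCompactSpace G] [MeasurableSpace G] [BorelSpace G]
    (μ : Measure G) [μ.IsHaarMeasure]
    {X : Type*} [AddCommGroup X] [UniformSpace X] [IsUniformAddGroup X]
    [Module ℝ X] [ContinuousSMul ℝ X] [LocallyConvexSpace ℝ X]
    (C : Set X) (hconv : Convex ℝ C)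
    (hbdd : Bornology.IsVonNBounded ℝ C) (hcompl : IsComplete C)
    (ρ : G → X → X) (hone : ∀ v, ρ 1 v = v)
    (hmul : ∀ g h v, ρ (g * h) v = ρ g (ρ h v))
    (hmaps : ∀ g, Set.MapsTo (ρ g) C C)
    (hcont : Continuous fun p : G × C => ρ p.1 (p.2 : X))
    (haff : ∀ g, ∀ x ∈ C, ∀ y ∈ C, ∀ t : ℝ, t ∈ Set.Icc (0:ℝ) 1 →
      ρ g (t • x + (1 - t) • y) = t • ρ g x + (1 - t) • ρ g y)
    (x : X) (hx : x ∈ C)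
    (F : Set G) (hF : IsCompact F) (hFpos : 0 < μ F)
    (xF : X) (hxFC : xF ∈ C)
    (hxF : ∀ φ : X →L[ℝ] ℝ, φ xF = (μ F).toReal⁻¹ * ∫ g in F, φ (ρ g x) ∂μ)
    (γ : G) (q : Seminorm ℝ X) (hq : Continuous q) :
    BddAbove (Set.range fun v : G => q (ρ v x)) ∧
    q (xF - ρ γ xF) ≤
      ((μ ((γ • F) ∆ F)).toReal / (μ F).toReal) * ⨆ v : G, q (ρ v x) := by
  have horb : ∀ v : G, ρ v x ∈ C := fun v => hmaps v hx
  obtain ⟨B, hB⟩ := aux_bound hbdd q (fun c z => map_smul_eq_mul q c z) hq (map_zero q)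
  have hbddr : BddAbove (Set.range fun v : G => q (ρ v x)) := by
    refine ⟨B, ?_⟩; rintro _ ⟨v, rfl⟩; exact hB _ (horb v)
  refine ⟨hbddr, ?_⟩
  set M := ⨆ v : G, q (ρ v x) with hMdef
  have hMv : ∀ v : G, q (ρ v x) ≤ M := fun v => le_ciSup hbddr v
  have hM0 : 0 ≤ M := le_trans (apply_nonneg q _) (hMv 1)
  -- measure facts
  have hFfin : μ F ≠ ⊤ := hF.measure_lt_top.ne
  have hFr0 : 0 < (μ F).toReal := ENNReal.toReal_pos hFpos.ne' hFfin
  set F' := toMeasurable μ F with hF'def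
  have hFF' : F ⊆ F' := subset_toMeasurable μ F
  have hF'm : MeasurableSet F' := measurableSet_toMeasurable μ F
  have hμF' : μ F' = μ F := measure_toMeasurable F
  have hres : μ.restrict F' = μ.restrict F := Measure.restrict_toMeasurable hFfin
  have hF'fin : μ F' ≠ ⊤ := by rw [hμF']; exact hFfin
  set Fγ := γ • F' with hFγdef
  have hFγm : MeasurableSet Fγ := by
    have him : Fγ = (fun g => γ⁻¹ * g) ⁻¹' F' := by
      ext g
      rw [hFγdef, Set.mem_smul_set_iff_inv_smul_mem]
      rfl
    rw [him]; exact hF'm.preimage (measurable_const_mul γ⁻¹)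
  have hμFγ : μ Fγ = μ F := by rw [hFγdef, MeasureTheory.measure_smul μ γ F', hμF']
  have hμγF : μ (γ • F) = μ F := MeasureTheory.measure_smul μ γ F
  have hFγfin : μ Fγ ≠ ⊤ := by rw [hμFγ]; exact hFfin
  -- continuity facts
  have hcx : Continuous fun g : G => ρ g x := by
    have h1 : Continuous fun g : G => ((g, (⟨x, hx⟩ : C)) : G × C) :=
      continuous_id.prodMk continuous_const
    exact hcont.comp h1
  have hργC : ContinuousOn (fun z : X => ρ γ z) C := by
    rw [continuousOn_iff_continuous_restrict]
    exact hcont.comp (continuous_const.prodMk continuous_id)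
  -- integrability helper
  have hint : ∀ (f : G → ℝ) (Bf : ℝ), Continuous f → (∀ g : G, |f g| ≤ Bf) →
      ∀ (S : Set G), μ S ≠ ⊤ → IntegrableOn f S μ := by
    intro f Bf hf hBf S hS
    haveI : IsFiniteMeasure (μ.restrict S) :=
      ⟨by rw [Measure.restrict_apply_univ]; exact lt_top_iff_ne_top.mpr hS⟩
    refine ⟨hf.aestronglyMeasurable, ?_⟩
    exact HasFiniteIntegral.of_bounded (C := Bf)
      (Filter.Eventually.of_forall fun g => by simpa [Real.norm_eq_abs] using hBf g)
  -- bound for continuous functionals on C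
  have hφbdd : ∀ φ : X →L[ℝ] ℝ, ∃ Bφ : ℝ, ∀ c ∈ C, |φ c| ≤ Bφ := by
    intro φ
    obtain ⟨Bφ, hBφ⟩ := aux_bound hbdd (fun z => |φ z|)
      (fun c z => by
        show |φ (c • z)| = ‖c‖ * |φ z|
        rw [_root_.map_smul, smul_eq_mul, abs_mul, Real.norm_eq_abs])
      (continuous_abs.comp φ.continuous) (by simp)
    exact ⟨Bφ, hBφ⟩
  -- barycenter property over the measurable hull
  have hxF' : ∀ φ : X →L[ℝ] ℝ, φ xF = (μ F).toReal⁻¹ * ∫ g in F', φ (ρ g x) ∂μ := by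
    intro φ
    rw [hxF φ]
    congr 1
    rw [hres]
  -- translation of integrals
  have htrans : ∀ f : G → ℝ, ∫ v in Fγ, f v ∂μ = ∫ g in F', f (γ * g) ∂μ := by
    intro f
    have him : Fγ = (fun g => γ * g) '' F' := by
      rw [hFγdef, ← Set.image_smul]
      rfl
    rw [him]
    exact (measurePreserving_mul_left μ γ).setIntegral_image_emb
      (measurableEmbedding_mulLeft γ) f F'
  -- KEY: the barycenter commutes with the affine map ρ γ, weakly
  have key : ∀ φ : X →L[ℝ] ℝ,
      φ (ρ γ xF) = (μ F).toReal⁻¹ * ∫ g in F', φ (ρ (γ * g) x) ∂μ := by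
    intro φ
    obtain ⟨B₂, hB₂⟩ := hφbdd φ
    have hc2 : Continuous fun g : G => φ (ρ (γ * g) x) :=
      φ.continuous.comp (hcx.comp (continuous_mul_left γ))
    have hb2 : ∀ g : G, |φ (ρ (γ * g) x)| ≤ B₂ := fun g => hB₂ _ (horb _)
    have hi2 : IntegrableOn (fun g => φ (ρ (γ * g) x)) F' μ := hint _ B₂ hc2 hb2 F' hF'fin
    set A := (μ F).toReal⁻¹ * ∫ g in F', φ (ρ (γ * g) x) ∂μ with hA
    set pt : G → X × ℝ := fun g => (ρ g x, φ (ρ (γ * g) x)) with hpt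
    have hzD : ((xF, A) : X × ℝ) ∈ closure (convexHull ℝ (pt '' F')) := by
      by_contra hz
      obtain ⟨f, u, hfu, huz⟩ := geometric_hahn_banach_closed_point
        ((convex_convexHull ℝ (pt '' F')).closure) isClosed_closure hz
      set φ₁ : X →L[ℝ] ℝ := f.comp (ContinuousLinearMap.inl ℝ X ℝ) with hφ₁
      set t : ℝ := f (0, 1) with ht
      have hfdec : ∀ p : X × ℝ, f p = φ₁ p.1 + p.2 * t := by
        intro p
        have hp : p = ((p.1, 0) : X × ℝ) + p.2 • ((0 : X), (1 : ℝ)) := by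
          simp [Prod.ext_iff]
        calc f p = f (((p.1, 0) : X × ℝ) + p.2 • ((0 : X), (1 : ℝ))) := by rw [← hp]
          _ = f (p.1, 0) + p.2 • f (0, 1) := by rw [map_add, _root_.map_smul]
          _ = φ₁ p.1 + p.2 * t := by
              rw [hφ₁, ht]
              simp [ContinuousLinearMap.comp_apply, smul_eq_mul]
      obtain ⟨B₁, hB₁⟩ := hφbdd φ₁
      have hc1 : Continuous fun g : G => φ₁ (ρ g x) := φ₁.continuous.comp hcx
      have hb1 : ∀ g : G, |φ₁ (ρ g x)| ≤ B₁ := fun g => hB₁ _ (horb g)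
      have hi1 : IntegrableOn (fun g => φ₁ (ρ g x)) F' μ := hint _ B₁ hc1 hb1 F' hF'fin
      have hfz : f (xF, A) = (μ F).toReal⁻¹ * ∫ g in F', f (pt g) ∂μ := by
        have heq : ∀ g : G, f (pt g) = φ₁ (ρ g x) + φ (ρ (γ * g) x) * t :=
          fun g => hfdec (pt g)
        rw [hfdec (xF, A)]
        simp only [heq]
        rw [integral_add hi1 (hi2.mul_const t), integral_mul_const]
        rw [hxF' φ₁, hA]
        ring
      have hptm : ∀ g ∈ F', f (pt g) ≤ u := fun g hg =>
        (hfu _ (subset_closure (subset_convexHull ℝ _ ⟨g, hg, rfl⟩))).le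
      have hintpt : IntegrableOn (fun g => f (pt g)) F' μ := by
        have heq2 : (fun g => f (pt g)) = fun g => φ₁ (ρ g x) + φ (ρ (γ * g) x) * t :=
          funext fun g => hfdec (pt g)
        rw [heq2]; exact hi1.add (hi2.mul_const t)
      have hub : ∫ g in F', f (pt g) ∂μ ≤ (μ F).toReal * u := by
        have h1 : ∫ g in F', f (pt g) ∂μ ≤ ∫ _ in F', u ∂μ :=
          setIntegral_mono_on hintpt
            (integrableOn_const hF'fin) hF'm hptm
        rw [setIntegral_const, measureReal_def, hμF'] at h1
        simpa [smul_eq_mul] using h1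
      have hle : f (xF, A) ≤ u := by
        rw [hfz]
        calc (μ F).toReal⁻¹ * ∫ g in F', f (pt g) ∂μ
            ≤ (μ F).toReal⁻¹ * ((μ F).toReal * u) :=
              mul_le_mul_of_nonneg_left hub (inv_nonneg.mpr ENNReal.toReal_nonneg)
          _ = u := by field_simp
      exact absurd huz (not_lt.mpr hle)
    set Γ : Set (X × ℝ) := {p : X × ℝ | p.1 ∈ C ∧ p.2 = φ (ρ γ p.1)} with hΓ
    have hS'Γ : pt '' F' ⊆ Γ := by
      rintro _ ⟨g, hg, rfl⟩
      refine ⟨horb g, ?_⟩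
      show φ (ρ (γ * g) x) = φ (ρ γ (ρ g x))
      rw [hmul]
    have hΓconv : Convex ℝ Γ := by
      rintro p hp r hr a b ha hb hab
      refine ⟨hconv hp.1 hr.1 ha hb hab, ?_⟩
      have hb' : b = 1 - a := by linarith
      subst hb'
      have haf := haff γ p.1 hp.1 r.1 hr.1 a ⟨ha, by linarith⟩
      show a * p.2 + (1 - a) * r.2 = φ (ρ γ (a • p.1 + (1 - a) • r.1))
      rw [haf, map_add, _root_.map_smul, _root_.map_smul, hp.2, hr.2, smul_eq_mul, smul_eq_mul]
    have hzΓ : ((xF, A) : X × ℝ) ∈ closure Γ :=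
      closure_mono (convexHull_min hS'Γ hΓconv) hzD
    haveI hne : (nhdsWithin ((xF, A) : X × ℝ) Γ).NeBot :=
      mem_closure_iff_nhdsWithin_neBot.mp hzΓ
    have hcw : ContinuousWithinAt (fun p : X × ℝ => φ (ρ γ p.1) - p.2) Γ (xF, A) := by
      have h1 : ContinuousWithinAt (fun p : X × ℝ => ρ γ p.1) Γ (xF, A) := by
        have h2 : ContinuousOn (fun p : X × ℝ => ρ γ p.1) (C ×ˢ (Set.univ : Set ℝ)) :=
          hργC.comp continuous_fst.continuousOn (fun p hp => hp.1)
        exact (h2.continuousWithinAt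
          (show ((xF, A) : X × ℝ) ∈ C ×ˢ Set.univ from ⟨hxFC, trivial⟩)).mono
          (fun p hp => ⟨hp.1, trivial⟩)
      exact ((φ.continuous.continuousAt).comp_continuousWithinAt h1).sub
        (continuous_snd.continuousWithinAt)
    have h0 : Filter.Tendsto (fun p : X × ℝ => φ (ρ γ p.1) - p.2)
        (nhdsWithin ((xF, A) : X × ℝ) Γ) (nhds 0) := by
      have hEq : ∀ᶠ p in nhdsWithin ((xF, A) : X × ℝ) Γ,
          (0 : ℝ) = φ (ρ γ p.1) - p.2 := by
        filter_upwards [self_mem_nhdsWithin] with p hp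
        rw [hp.2]; ring
      exact Filter.Tendsto.congr' hEq tendsto_const_nhds
    have huniq : (0 : ℝ) = φ (ρ γ xF) - A := tendsto_nhds_unique h0 hcw
    linarith
  -- Hahn-Banach functional for the difference
  obtain ⟨φ, hφy, hφabs⟩ := aux_hb q hq (xF - ρ γ xF)
  have hfM : ∀ v : G, |φ (ρ v x)| ≤ M := fun v => (hφabs _).trans (hMv v)
  have hcφ : Continuous fun v : G => φ (ρ v x) := φ.continuous.comp hcx
  have hIF' : IntegrableOn (fun v => φ (ρ v x)) F' μ := hint _ M hcφ hfM F' hF'fin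
  have hIFγ : IntegrableOn (fun v => φ (ρ v x)) Fγ μ := hint _ M hcφ hfM Fγ hFγfin
  have hval : φ (xF - ρ γ xF)
      = (μ F).toReal⁻¹ * ((∫ v in F', φ (ρ v x) ∂μ) - ∫ v in Fγ, φ (ρ v x) ∂μ) := by
    rw [map_sub, hxF' φ, key φ, htrans (fun v => φ (ρ v x))]
    ring
  have hs1 : (∫ v in F', φ (ρ v x) ∂μ)
      = (∫ v in F' ∩ Fγ, φ (ρ v x) ∂μ) + ∫ v in F' \ Fγ, φ (ρ v x) ∂μ :=
    (integral_inter_add_diff hFγm hIF').symm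
  have hs2 : (∫ v in Fγ, φ (ρ v x) ∂μ)
      = (∫ v in Fγ ∩ F', φ (ρ v x) ∂μ) + ∫ v in Fγ \ F', φ (ρ v x) ∂μ :=
    (integral_inter_add_diff hF'm hIFγ).symm
  have hdiffeq : (∫ v in F', φ (ρ v x) ∂μ) - ∫ v in Fγ, φ (ρ v x) ∂μ
      = (∫ v in F' \ Fγ, φ (ρ v x) ∂μ) - ∫ v in Fγ \ F', φ (ρ v x) ∂μ := by
    rw [hs1, hs2, Set.inter_comm F' Fγ]
    ring
  have hd1fin : μ (F' \ Fγ) < ⊤ :=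
    lt_of_le_of_lt (measure_mono Set.diff_subset) (lt_top_iff_ne_top.mpr hF'fin)
  have hd2fin : μ (Fγ \ F') < ⊤ :=
    lt_of_le_of_lt (measure_mono Set.diff_subset) (lt_top_iff_ne_top.mpr hFγfin)
  have hbnd1 : |∫ v in F' \ Fγ, φ (ρ v x) ∂μ| ≤ M * (μ (F' \ Fγ)).toReal := by
    have := norm_setIntegral_le_of_norm_le_const (μ := μ) (s := F' \ Fγ)
      (f := fun v => φ (ρ v x)) hd1fin
      (fun v _ => by simpa [Real.norm_eq_abs] using hfM v)
    simpa [Real.norm_eq_abs, measureReal_def] using this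
  have hbnd2 : |∫ v in Fγ \ F', φ (ρ v x) ∂μ| ≤ M * (μ (Fγ \ F')).toReal := by
    have := norm_setIntegral_le_of_norm_le_const (μ := μ) (s := Fγ \ F')
      (f := fun v => φ (ρ v x)) hd2fin
      (fun v _ => by simpa [Real.norm_eq_abs] using hfM v)
    simpa [Real.norm_eq_abs, measureReal_def] using this
  have hsd : (μ (Fγ ∆ F')).toReal = (μ (Fγ \ F')).toReal + (μ (F' \ Fγ)).toReal := by
    rw [Set.symmDiff_def, measure_union (disjoint_sdiff_sdiff) (hF'm.diff hFγm),
      ENNReal.toReal_add hd2fin.ne hd1fin.ne]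
  have hγFfin : μ ((γ • F) ∆ F) ≠ ⊤ := by
    refine ne_top_of_le_ne_top ?_ (measure_mono Set.symmDiff_subset_union)
    rw [← lt_top_iff_ne_top]
    calc μ (γ • F ∪ F) ≤ μ (γ • F) + μ F := measure_union_le _ _
      _ < ⊤ := by rw [hμγF]; exact ENNReal.add_lt_top.mpr ⟨lt_top_iff_ne_top.mpr hFfin,
          lt_top_iff_ne_top.mpr hFfin⟩
  have hcomp : (μ (Fγ ∆ F')).toReal ≤ (μ ((γ • F) ∆ F)).toReal := by
    apply ENNReal.toReal_mono hγFfin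
    exact aux_hull μ (Set.smul_set_mono hFF') hFF' hFγm hF'm
      (by rw [hμFγ, hμγF]) (le_of_eq hμF') hFγfin hF'fin
  calc q (xF - ρ γ xF) = φ (xF - ρ γ xF) := hφy.symm
    _ = (μ F).toReal⁻¹ *
        ((∫ v in F' \ Fγ, φ (ρ v x) ∂μ) - ∫ v in Fγ \ F', φ (ρ v x) ∂μ) := by
          rw [hval, hdiffeq]
    _ ≤ (μ F).toReal⁻¹ * (M * (μ ((γ • F) ∆ F)).toReal) := by
          refine mul_le_mul_of_nonneg_left ?_ (inv_nonneg.mpr ENNReal.toReal_nonneg)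
          have hA1 := le_abs_self (∫ v in F' \ Fγ, φ (ρ v x) ∂μ)
          have hA2 := neg_abs_le (∫ v in Fγ \ F', φ (ρ v x) ∂μ)
          calc (∫ v in F' \ Fγ, φ (ρ v x) ∂μ) - ∫ v in Fγ \ F', φ (ρ v x) ∂μ
              ≤ |∫ v in F' \ Fγ, φ (ρ v x) ∂μ| + |∫ v in Fγ \ F', φ (ρ v x) ∂μ| := by
                linarith
            _ ≤ M * (μ (F' \ Fγ)).toReal + M * (μ (Fγ \ F')).toReal := add_le_add hbnd1 hbnd2
            _ = M * (μ (Fγ ∆ F')).toReal := by rw [hsd]; ring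
            _ ≤ M * (μ ((γ • F) ∆ F)).toReal := mul_le_mul_of_nonneg_left hcomp hM0
    _ = ((μ ((γ • F) ∆ F)).toReal / (μ F).toReal) * M := by ring
end

section
/- Let $G$ be a σ-compact, locally compact, amenable group acting jointly continuously by affine maps on a complete, bounded, convex subset $C$ of a metrizable locally convex space. Then there exists a sequence $(x_n)$ in $C$ such that $x_n - g x_n \to 0$ for all $g \in G$. -/
open scoped Pointwise
open MeasureTheory

section ConvexAux

variable {X : Type*} [AddCommGroup X] [Module ℝ X]

lemma stmt15_nice_smul_mem {S : Set X} (hS : Convex ℝ S) (h0 : (0:X) ∈ S) {t : ℝ}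
    (ht0 : 0 ≤ t) (ht1 : t ≤ 1) {x : X} (hx : x ∈ S) : t • x ∈ S := by
  have h := hS hx h0 ht0 (by linarith : (0:ℝ) ≤ 1 - t) (by ring)
  simpa using h

lemma stmt15_sum_smul_mem {S : Set X} (hS : Convex ℝ S) (h0 : (0:X) ∈ S)
    {ι : Type*} (s : Finset ι) (a : ι → ℝ) (d : ι → X)
    (ha : ∀ i ∈ s, 0 ≤ a i) (h1 : ∑ i ∈ s, a i ≤ 1)
    (hd : ∀ i ∈ s, a i ≠ 0 → d i ∈ S) :
    ∑ i ∈ s, a i • d i ∈ S := by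
  classical
  set d' : ι → X := fun i => if a i = 0 then 0 else d i with hd'
  have hsum : ∑ i ∈ s, a i • d i = ∑ i ∈ s, a i • d' i := by
    refine Finset.sum_congr rfl fun i hi => ?_
    by_cases h : a i = 0 <;> simp [d', h]
  rw [hsum]
  have hd'S : ∀ i ∈ s, d' i ∈ S := by
    intro i hi
    by_cases h : a i = 0 <;> simp [d', h, h0, hd i hi]
  have hT0 : 0 ≤ ∑ i ∈ s, a i := Finset.sum_nonneg ha
  rcases eq_or_lt_of_le hT0 with h | h
  · have hz : ∀ i ∈ s, a i = 0 := (Finset.sum_eq_zero_iff_of_nonneg ha).1 h.symm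
    rw [Finset.sum_eq_zero (fun i hi => by rw [hz i hi, zero_smul])]
    exact h0
  · set T := ∑ i ∈ s, a i with hT
    have key : ∑ i ∈ s, (a i / T) • d' i ∈ S := by
      apply hS.sum_mem (fun i hi => div_nonneg (ha i hi) hT0) ?_ hd'S
      rw [← Finset.sum_div, div_self h.ne']
    have heq : ∑ i ∈ s, a i • d' i = T • ∑ i ∈ s, (a i / T) • d' i := by
      rw [Finset.smul_sum]
      refine Finset.sum_congr rfl fun i hi => ?_
      rw [smul_smul]
      congr 1
      field_simp
    rw [heq]
    exact stmt15_nice_smul_mem hS h0 hT0 h1 key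

lemma stmt15_sum_eq_smul {C : Set X} (hC : Convex ℝ C) {ι : Type*} (s : Finset ι)
    (w : ι → ℝ) (y : ι → X) (hw : ∀ i ∈ s, 0 ≤ w i) (hy : ∀ i ∈ s, y i ∈ C)
    {β : ℝ} (hβ : ∑ i ∈ s, w i = β) (hβ0 : 0 < β) :
    ∃ p ∈ C, ∑ i ∈ s, w i • y i = β • p := by
  refine ⟨∑ i ∈ s, (w i / β) • y i,
    hC.sum_mem (fun i hi => div_nonneg (hw i hi) hβ0.le)
      (by rw [← Finset.sum_div, hβ, div_self hβ0.ne']) hy, ?_⟩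
  rw [Finset.smul_sum]
  refine Finset.sum_congr rfl fun i hi => ?_
  rw [smul_smul]
  congr 1
  field_simp

lemma stmt15_map_convex_sum {C : Set X} (hC : Convex ℝ C) (T : X → X)
    (hT : ∀ x ∈ C, ∀ y ∈ C, ∀ t : ℝ, t ∈ Set.Icc (0:ℝ) 1 →
      T (t • x + (1 - t) • y) = t • T x + (1 - t) • T y)
    {ι : Type*} (s : Finset ι) :
    ∀ (w : ι → ℝ) (y : ι → X), (∀ i ∈ s, 0 ≤ w i) → (∑ i ∈ s, w i) = 1 →
      (∀ i ∈ s, y i ∈ C) → T (∑ i ∈ s, w i • y i) = ∑ i ∈ s, w i • T (y i) := by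
  classical
  induction s using Finset.induction with
  | empty => intro w y _ h1 _; simp at h1
  | @insert a s ha ih =>
    intro w y hw h1 hy
    rw [Finset.sum_insert ha] at h1
    rw [Finset.sum_insert ha, Finset.sum_insert ha]
    have hwn : ∀ i ∈ s, 0 ≤ w i := fun i hi => hw i (Finset.mem_insert_of_mem hi)
    have hyn : ∀ i ∈ s, y i ∈ C := fun i hi => hy i (Finset.mem_insert_of_mem hi)
    have hσnn : 0 ≤ ∑ i ∈ s, w i := Finset.sum_nonneg hwn
    by_cases hwa : w a = 1
    · have hrest : ∑ i ∈ s, w i = 0 := by rw [hwa] at h1; linarith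
      have hz : ∀ i ∈ s, w i = 0 := (Finset.sum_eq_zero_iff_of_nonneg hwn).1 hrest
      have h2 : ∑ i ∈ s, w i • y i = 0 :=
        Finset.sum_eq_zero fun i hi => by rw [hz i hi, zero_smul]
      have h3 : ∑ i ∈ s, w i • T (y i) = 0 :=
        Finset.sum_eq_zero fun i hi => by rw [hz i hi, zero_smul]
      rw [h2, h3, hwa]
      simp
    · have hwa1 : w a < 1 := lt_of_le_of_ne (by linarith) hwa
      have hσ0 : 0 < ∑ i ∈ s, w i := by
        rcases hσnn.lt_or_eq with h | h
        · exact h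
        · exact absurd (by linarith : w a = 1) hwa
      set σ := ∑ i ∈ s, w i with hσdef
      have hσε : σ = 1 - w a := by linarith
      have hw'n : ∀ i ∈ s, 0 ≤ w i / σ := fun i hi => div_nonneg (hwn i hi) hσnn
      have hw'sum : ∑ i ∈ s, w i / σ = 1 := by
        rw [← Finset.sum_div, ← hσdef, div_self hσ0.ne']
      have hz : (∑ i ∈ s, (w i / σ) • y i) ∈ C := hC.sum_mem hw'n hw'sum hyn
      have hys : ∑ i ∈ s, w i • y i = σ • ∑ i ∈ s, (w i / σ) • y i := by
        rw [Finset.smul_sum]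
        refine Finset.sum_congr rfl fun i hi => ?_
        rw [smul_smul]
        congr 1
        field_simp
      have hTz := ih (fun i => w i / σ) y hw'n hw'sum hyn
      have key := hT (y a) (hy a (Finset.mem_insert_self a s)) _ hz (w a)
        ⟨hw a (Finset.mem_insert_self a s), hwa1.le⟩
      rw [← hσε] at key
      rw [hys, key, hTz, Finset.smul_sum]
      congr 1
      refine Finset.sum_congr rfl fun i hi => ?_
      rw [smul_smul]
      congr 1
      field_simp

end ConvexAux

section TopAux

lemma stmt15_nice_half {X : Type*} [AddCommGroup X] [Module ℝ X] [TopologicalSpace X]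
    [IsTopologicalAddGroup X] [LocallyConvexSpace ℝ X] {W : Set X} (hW : W ∈ nhds 0) :
    ∃ S : Set X, S ∈ nhds 0 ∧ Convex ℝ S ∧ (0:X) ∈ S ∧ (∀ x ∈ S, -x ∈ S) ∧ S + S ⊆ W := by
  obtain ⟨V, hV, hVW⟩ := exists_nhds_zero_half hW
  obtain ⟨T, ⟨hT, hTc⟩, hTV⟩ := (LocallyConvexSpace.convex_basis_zero ℝ X).mem_iff.1 hV
  have hnegT : (-T : Set X) ∈ nhds (0:X) := by
    have hc : ContinuousAt (fun x : X => -x) 0 := continuous_neg.continuousAt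
    have := hc.preimage_mem_nhds (by simpa using hT)
    simpa [Set.neg_preimage] using this
  refine ⟨T ∩ -T, Filter.inter_mem hT hnegT, hTc.inter hTc.neg, ?_, ?_, ?_⟩
  · exact ⟨mem_of_mem_nhds hT, by simpa using mem_of_mem_nhds hT⟩
  · rintro x ⟨hx1, hx2⟩
    exact ⟨by simpa using hx2, by simpa using hx1⟩
  · rintro z ⟨x, hx, y, hy, rfl⟩
    exact hVW x (hTV hx.1) y (hTV hy.1)

lemma stmt15_unif_cont {G X : Type*} [Group G] [TopologicalSpace G] [IsTopologicalGroup G]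
    [AddCommGroup X] [TopologicalSpace X] [IsTopologicalAddGroup X]
    {f : G → X} (hf : Continuous f) {S : Set G} (hS : IsCompact S)
    {N : Set X} (hN : N ∈ nhds 0) :
    ∃ V : Set G, IsOpen V ∧ (1:G) ∈ V ∧ ∀ h ∈ S, ∀ w ∈ V, f (h * w) - f h ∈ N := by
  -- a pair-neighborhood
  obtain ⟨N3, hN3, hN3sub⟩ : ∃ N3 ∈ nhds (0:X), ∀ a ∈ N3, ∀ b ∈ N3, a - b ∈ N := by
    have hc : ContinuousAt (fun p : X × X => p.1 - p.2) (0, 0) := by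
      exact (continuous_fst.sub continuous_snd).continuousAt
    have hpre := hc.preimage_mem_nhds (by simpa using hN)
    rw [nhds_prod_eq, Filter.mem_prod_iff] at hpre
    obtain ⟨N1, hN1, N2, hN2, hsub⟩ := hpre
    exact ⟨N1 ∩ N2, Filter.inter_mem hN1 hN2, fun a ha b hb =>
      hsub (Set.mk_mem_prod ha.1 hb.2)⟩
  -- for each h, a neighborhood of 1
  have hWh : ∀ h : G, ∃ Vh : Set G, IsOpen Vh ∧ (1:G) ∈ Vh ∧
      ∀ w ∈ Vh * Vh, f (h * w) - f h ∈ N3 := by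
    intro h
    have hc : ContinuousAt (fun w : G => f (h * w) - f h) 1 := by
      exact ((hf.comp (continuous_const.mul continuous_id)).sub continuous_const).continuousAt
    have hpre := hc.preimage_mem_nhds (by simpa using hN3)
    obtain ⟨Vh, hVho, hVh1, hVhsub⟩ := exists_open_nhds_one_mul_subset hpre
    exact ⟨Vh, hVho, hVh1, fun w hw => hVhsub hw⟩
  choose Vh hVho hVh1 hVhsub using hWh
  obtain ⟨t, _, htcov⟩ := hS.elim_nhds_subcover (fun h => h • Vh h)
    (fun h _ => (hVho h |>.smul h).mem_nhds ⟨1, hVh1 h, mul_one h⟩)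
  refine ⟨⋂ h ∈ t, Vh h, isOpen_biInter_finset (fun h _ => hVho h), ?_, ?_⟩
  · exact Set.mem_iInter₂.2 fun h _ => hVh1 h
  · intro h hh w hw
    obtain ⟨x, hxt, hhx⟩ := Set.mem_iUnion₂.1 (htcov hh)
    obtain ⟨a, haV, hax⟩ := hhx
    -- hax : x • a = h, i.e. x * a = h
    have hax' : x * a = h := hax
    have h1 : f (h * w) - f x ∈ N3 := by
      have : h * w = x * (a * w) := by rw [← hax', mul_assoc]
      rw [this]
      exact hVhsub x (a * w) (Set.mul_mem_mul haV (Set.mem_iInter₂.1 hw x hxt))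
    have h2 : f h - f x ∈ N3 := by
      have : h = x * (a * 1) := by rw [mul_one, hax']
      rw [this]
      exact hVhsub x (a * 1) (Set.mul_mem_mul haV (hVh1 x))
    have := hN3sub _ h1 _ h2
    simpa using this

end TopAux

open scoped symmDiff Pointwise
open MeasureTheory

/-- A σ-compact locally compact amenable group (amenability expressed via the Følner
condition over compact sets, w.r.t. left Haar measure) acting jointly continuously by
affine maps on a complete bounded convex subset `C` of a metrizable locally convex space
admits an approximate fixed point *sequence*. -/
theorem stmt15 {G : Type*} [Group G] [TopologicalSpace G] [IsTopologicalGroup G]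
    [LocallyCompactSpace G] [SigmaCompactSpace G] [MeasurableSpace G] [BorelSpace G]
    (μ : Measure G) [μ.IsHaarMeasure]
    (hFolner : ∀ F : Set G, IsCompact F → ∀ ε : ℝ, 0 < ε →
      ∃ U : Set G, MeasurableSet U ∧ 0 < μ U ∧ μ U < ⊤ ∧
        ∀ x ∈ F, μ ((x • U) ∆ U) < ENNReal.ofReal ε * μ U)
    {X : Type*} [AddCommGroup X] [UniformSpace X] [IsUniformAddGroup X]
    [Module ℝ X] [ContinuousSMul ℝ X] [LocallyConvexSpace ℝ X]
    [TopologicalSpace.MetrizableSpace X]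
    (C : Set X) (hne : C.Nonempty) (hconv : Convex ℝ C)
    (hbdd : Bornology.IsVonNBounded ℝ C) (hcompl : IsComplete C)
    (ρ : G → X → X) (hone : ∀ v, ρ 1 v = v)
    (hmul : ∀ g h v, ρ (g * h) v = ρ g (ρ h v))
    (hmaps : ∀ g, Set.MapsTo (ρ g) C C)
    (hcont : Continuous fun p : G × C => ρ p.1 (p.2 : X))
    (haff : ∀ g, ∀ x ∈ C, ∀ y ∈ C, ∀ t : ℝ, t ∈ Set.Icc (0:ℝ) 1 →
      ρ g (t • x + (1 - t) • y) = t • ρ g x + (1 - t) • ρ g y) :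
    ∃ x : ℕ → X, (∀ n, x n ∈ C) ∧
      ∀ g : G, Filter.Tendsto (fun n => x n - ρ g (x n)) Filter.atTop (nhds 0) := by
  classical
  obtain ⟨v, hv⟩ := hne
  set f : G → X := fun h => ρ h v with hfdef
  have hfc : Continuous f :=
    hcont.comp (continuous_id.prodMk (continuous_const : Continuous fun _ : G => (⟨v, hv⟩ : C)))
  have hfC : ∀ h, f h ∈ C := fun h => hmaps h hv
  -- the key finite step
  have key : ∀ F : Set G, IsCompact F → ∀ W ∈ nhds (0:X), ∃ x ∈ C, ∀ g ∈ F, x - ρ g x ∈ W := by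
    intro F hF W hW
    obtain ⟨Sa, hSa_n, hSa_c, hSa_0, hSa_neg, hSa_add⟩ := stmt15_nice_half hW
    obtain ⟨T, hT_n, hT_c, hT_0, hT_neg, hT_add⟩ := stmt15_nice_half hSa_n
    obtain ⟨r, hr, hrC⟩ := (hbdd hT_n).exists_pos
    have hCrT : C ⊆ r • T := hrC r (by rw [Real.norm_eq_abs, abs_of_pos hr])
    set ε : ℝ := min (1/(4*r)) 2⁻¹ with hεdef
    have hε : 0 < ε := lt_min (by positivity) (by norm_num)
    have hε2 : ε ≤ 2⁻¹ := min_le_right _ _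
    have hε4r : 4 * ε * r ≤ 1 := by
      have h1 : ε ≤ 1/(4*r) := min_le_left _ _
      rw [div_eq_inv_mul] at h1
      have h4r : 0 < 4 * r := by positivity
      calc 4 * ε * r ≤ 4 * ((4*r)⁻¹ * 1) * r := by nlinarith
        _ = 1 := by field_simp
    set F1 : Set G := insert 1 F with hF1def
    have hF1 : IsCompact F1 := hF.insert 1
    obtain ⟨U, hUm, hU0, hUt, hUF⟩ := hFolner F1 hF1 ε hε
    set δ0 : ENNReal := ENNReal.ofReal ε * μ U with hδ0def
    have hδ0pos : δ0 ≠ 0 := by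
      simp only [hδ0def]
      exact mul_ne_zero (by simpa using hε) hU0.ne'
    have hδ0fin : δ0 ≠ ⊤ := by
      simp only [hδ0def]
      exact (ENNReal.mul_lt_top ENNReal.ofReal_lt_top hUt).ne
    -- choose a compact set capturing most of U, via the compact exhaustion
    set KE := CompactExhaustion.choice G with hKEdef
    have hdirected : Directed (· ⊆ ·) (fun n => U ∩ KE n) := by
      intro m n
      exact ⟨max m n, Set.inter_subset_inter_right U (KE.subset (le_max_left m n)),
        Set.inter_subset_inter_right U (KE.subset (le_max_right m n))⟩
    have hsup : ⨆ n, μ (U ∩ KE n) = μ U := by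
      rw [← hdirected.measure_iUnion]
      congr 1
      rw [← Set.inter_iUnion, KE.iUnion_eq, Set.inter_univ]
    have hlt : μ U - δ0 < ⨆ n, μ (U ∩ KE n) := by
      rw [hsup]
      exact ENNReal.sub_lt_self hUt.ne hU0.ne' hδ0pos
    obtain ⟨n0, hn0⟩ := lt_iSup_iff.1 hlt
    have hKbig : μ U < μ (U ∩ KE n0) + δ0 := by
      by_cases hle : δ0 ≤ μ U
      · exact (ENNReal.sub_lt_iff_lt_right hδ0fin hle).1 hn0
      · push_neg at hle
        exact hle.trans_le le_add_self
    -- uniform continuity on F1 * KE n0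
    obtain ⟨V, hVo, hV1, hVuc⟩ := stmt15_unif_cont hfc (hF1.mul (KE.isCompact n0)) hT_n
    -- finite cover of KE n0 by translates of V
    obtain ⟨t, htK, htcov⟩ := (KE.isCompact n0).elim_nhds_subcover (fun u => u • V)
      (fun u _ => (hVo.smul u).mem_nhds (by exact ⟨1, hV1, mul_one u⟩))
    obtain ⟨N, e, he_mem, hcov'⟩ :
        ∃ (N : ℕ) (e : Fin N → G), (∀ i, e i ∈ KE n0) ∧ (KE n0 ⊆ ⋃ i, e i • V) := by
      refine ⟨t.toList.length, fun i => t.toList.get i, ?_, ?_⟩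
      · intro i
        refine htK _ ?_
        rw [← Finset.mem_toList]
        have h := List.get_mem t.toList ⟨i.1, i.2⟩
        rwa [Fin.eta] at h
      · intro y hy
        obtain ⟨z, hz, hyz⟩ := Set.mem_iUnion₂.1 (htcov hy)
        obtain ⟨i, hi⟩ := List.mem_iff_get.1 (Finset.mem_toList.2 hz)
        refine Set.mem_iUnion.2 ⟨i, ?_⟩
        show y ∈ t.toList.get i • V
        rw [hi]
        exact hyz
    -- the cells
    set Q : Fin N → Set G :=
      fun i => (U ∩ e i • V) \ ⋃ j, ⋃ (_ : j < i), e j • V with hQdef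
    set U' : Set G := U ∩ ⋃ i, e i • V with hU'def
    have hQm : ∀ i, MeasurableSet (Q i) := by
      intro i
      exact ((hUm.inter ((hVo.smul (e i)).measurableSet)).diff
        (MeasurableSet.iUnion fun j => MeasurableSet.iUnion fun _ =>
          (hVo.smul (e j)).measurableSet))
    have hQsubV : ∀ i, Q i ⊆ e i • V := fun i x hx => hx.1.2
    have hQsubU : ∀ i, Q i ⊆ U := fun i x hx => hx.1.1
    have hQdisj : ∀ {i j : Fin N}, i < j → Disjoint (Q i) (Q j) := by
      intro i j hij
      rw [Set.disjoint_left]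
      intro x hxi hxj
      exact hxj.2 (Set.mem_iUnion.2 ⟨i, Set.mem_iUnion.2 ⟨hij, hxi.1.2⟩⟩)
    have hQpair : Pairwise (Function.onFun Disjoint Q) := by
      intro i j hij
      rcases lt_or_gt_of_ne hij with h | h
      · exact hQdisj h
      · exact (hQdisj h).symm
    have hQunion : ⋃ i, Q i = U' := by
      apply Set.Subset.antisymm
      · intro x hx
        obtain ⟨i, hi⟩ := Set.mem_iUnion.1 hx
        exact ⟨hi.1.1, Set.mem_iUnion.2 ⟨i, hi.1.2⟩⟩
      · rintro x ⟨hxU, hxV⟩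
        have hnonempty : (Finset.univ.filter (fun i => x ∈ e i • V)).Nonempty := by
          obtain ⟨i, hi⟩ := Set.mem_iUnion.1 hxV
          exact ⟨i, Finset.mem_filter.2 ⟨Finset.mem_univ i, hi⟩⟩
        set i0 := (Finset.univ.filter (fun i => x ∈ e i • V)).min' hnonempty with hi0def
        have hi0mem : x ∈ e i0 • V :=
          (Finset.mem_filter.1 ((Finset.univ.filter _).min'_mem hnonempty)).2
        refine Set.mem_iUnion.2 ⟨i0, ⟨hxU, hi0mem⟩, ?_⟩
        intro hmem
        obtain ⟨j, hj⟩ := Set.mem_iUnion.1 hmem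
        obtain ⟨hjlt, hjV⟩ := Set.mem_iUnion.1 hj
        have : i0 ≤ j := Finset.min'_le _ j (Finset.mem_filter.2 ⟨Finset.mem_univ j, hjV⟩)
        exact absurd this (not_le.2 hjlt)
    have hU'm : MeasurableSet U' :=
      hUm.inter (MeasurableSet.iUnion fun i => (hVo.smul (e i)).measurableSet)
    have hU'U : U' ⊆ U := Set.inter_subset_left
    have hU'fin : μ U' < ⊤ := (measure_mono hU'U).trans_lt hUt
    have hUK' : U ∩ KE n0 ⊆ U' := fun x hx => ⟨hx.1, hcov' hx.2⟩
    have hμU'big : μ U < μ U' + δ0 :=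
      hKbig.trans_le (add_le_add (measure_mono hUK') le_rfl)
    -- real quantities
    set uR : ℝ := (μ U).toReal with huRdef
    have huR : 0 < uR := ENNReal.toReal_pos hU0.ne' hUt.ne
    set m : ℝ := (μ U').toReal with hmdef
    have hδR : δ0.toReal = ε * uR := by
      rw [hδ0def, ENNReal.toReal_mul, ENNReal.toReal_ofReal hε.le]
    have hbigR : uR < m + ε * uR := by
      have h1 : (μ U).toReal < (μ U' + δ0).toReal :=
        (ENNReal.toReal_lt_toReal hUt.ne (by
          exact (ENNReal.add_lt_top.2 ⟨hU'fin, hδ0fin.lt_top⟩).ne)).2 hμU'big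
      rw [ENNReal.toReal_add hU'fin.ne hδ0fin, hδR] at h1
      exact h1
    have hεuR : ε * uR ≤ 2⁻¹ * uR := mul_le_mul_of_nonneg_right hε2 huR.le
    have hm0 : 0 < m := by linarith
    have huR2m : uR ≤ 2 * m := by linarith
    set tt : Fin N → ℝ := fun j => (μ (Q j)).toReal / m with httdef
    have hQfin : ∀ i, μ (Q i) ≠ ⊤ :=
      fun i => ((measure_mono (hQsubU i)).trans_lt hUt).ne
    have hQsum : ∑ i, μ (Q i) = μ U' := by
      have h := measure_iUnion (μ := μ) hQpair hQm
      rw [hQunion, tsum_fintype] at h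
      exact h.symm
    have htt1 : ∑ j, tt j = 1 := by
      rw [httdef]
      simp only
      rw [← Finset.sum_div, ← ENNReal.toReal_sum (fun i _ => hQfin i), hQsum, div_self hm0.ne']
    have httnn : ∀ j, 0 ≤ tt j := fun j => div_nonneg ENNReal.toReal_nonneg hm0.le
    set x : X := ∑ j, tt j • f (e j) with hxdef
    have hxC : x ∈ C := hconv.sum_mem (fun j _ => httnn j) htt1 (fun j _ => hfC (e j))
    refine ⟨x, hxC, ?_⟩
    intro g hg
    have hgF1 : g ∈ F1 := Set.mem_insert_of_mem 1 hg
    -- affine expansion of ρ g x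
    have hρx : ρ g x = ∑ j, tt j • f (g * e j) := by
      rw [hxdef, stmt15_map_convex_sum hconv (ρ g) (haff g) Finset.univ tt (fun j => f (e j))
        (fun j _ => httnn j) htt1 (fun j _ => hfC (e j))]
      refine Finset.sum_congr rfl fun j _ => ?_
      congr 1
      rw [hfdef]
      exact (hmul g (e j) v).symm
    -- per-pair real weights
    set a : Fin N → Fin N → ℝ := fun j k => (μ (Q j ∩ g • Q k)).toReal / m with hadef
    set bb : Fin N → ℝ := fun j => (μ (Q j \ g • U')).toReal / m with hbbdef
    set cc : Fin N → ℝ := fun k => (μ ((g • Q k) \ U')).toReal / m with hccdef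
    have hann : ∀ j k, 0 ≤ a j k := fun j k => div_nonneg ENNReal.toReal_nonneg hm0.le
    have hbnn : ∀ j, 0 ≤ bb j := fun j => div_nonneg ENNReal.toReal_nonneg hm0.le
    have hcnn : ∀ k, 0 ≤ cc k := fun k => div_nonneg ENNReal.toReal_nonneg hm0.le
    have hgQm : ∀ k, MeasurableSet (g • Q k) := fun k => (hQm k).const_smul g
    have hgQfin : ∀ k, μ (g • Q k) ≠ ⊤ := by
      intro k
      rw [measure_smul μ g (Q k)]
      exact hQfin k
    have hgU'm : MeasurableSet (g • U') := hU'm.const_smul g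
    have hgU'eq : g • U' = ⋃ k, g • Q k := by
      rw [← hQunion, Set.smul_set_iUnion]
    have hsmul_disj : ∀ {A B : Set G}, Disjoint A B → Disjoint (g • A) (g • B) := by
      intro A B hAB
      rw [Set.disjoint_iff_inter_eq_empty] at hAB ⊢
      rw [← Set.smul_set_inter, hAB, Set.smul_set_empty]
    have hgQpair : Pairwise (Function.onFun Disjoint (fun k => g • Q k)) :=
      fun i j hij => hsmul_disj (hQpair hij)
    -- decomposition identities
    have hdecj : ∀ j, μ (Q j) = (∑ k, μ (Q j ∩ g • Q k)) + μ (Q j \ g • U') := by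
      intro j
      have h1 : μ (Q j ∩ g • U') + μ (Q j \ g • U') = μ (Q j) :=
        measure_inter_add_diff _ hgU'm
      have h2 : Q j ∩ g • U' = ⋃ k, (Q j ∩ g • Q k) := by
        rw [hgU'eq, Set.inter_iUnion]
      have h3 : μ (Q j ∩ g • U') = ∑ k, μ (Q j ∩ g • Q k) := by
        rw [h2]
        have h := measure_iUnion (μ := μ) (fun i i' hii' =>
          ((hgQpair hii').mono Set.inter_subset_right Set.inter_subset_right))
          (fun k => (hQm j).inter (hgQm k))
        rw [tsum_fintype] at h
        exact h
      rw [← h1, h3]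
    have hdeck : ∀ k, μ (Q k) = (∑ j, μ (Q j ∩ g • Q k)) + μ ((g • Q k) \ U') := by
      intro k
      have h0 : μ (Q k) = μ (g • Q k) := (measure_smul μ g (Q k)).symm
      have h1 : μ ((g • Q k) ∩ U') + μ ((g • Q k) \ U') = μ (g • Q k) :=
        measure_inter_add_diff _ hU'm
      have h2 : (g • Q k) ∩ U' = ⋃ j, (Q j ∩ g • Q k) := by
        rw [← hQunion, Set.inter_iUnion]
        exact Set.iUnion_congr fun j => Set.inter_comm _ _
      have h3 : μ ((g • Q k) ∩ U') = ∑ j, μ (Q j ∩ g • Q k) := by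
        rw [h2]
        have h := measure_iUnion (μ := μ) (fun i i' hii' =>
          ((hQpair hii').mono Set.inter_subset_left Set.inter_subset_left))
          (fun j => (hQm j).inter (hgQm k))
        rw [tsum_fintype] at h
        exact h
      rw [h0, ← h1, h3]
    have hafin : ∀ j k, μ (Q j ∩ g • Q k) ≠ ⊤ :=
      fun j k => ((measure_mono Set.inter_subset_left).trans_lt (hQfin j).lt_top).ne
    have hbfin : ∀ j, μ (Q j \ g • U') ≠ ⊤ :=
      fun j => ((measure_mono Set.diff_subset).trans_lt (hQfin j).lt_top).ne
    have hcfin : ∀ k, μ ((g • Q k) \ U') ≠ ⊤ :=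
      fun k => ((measure_mono Set.diff_subset).trans_lt (hgQfin k).lt_top).ne
    have htta : ∀ j, tt j = (∑ k, a j k) + bb j := by
      intro j
      rw [httdef, hadef, hbbdef]
      simp only
      rw [hdecj j, ENNReal.toReal_add
          (ENNReal.sum_lt_top.2 fun k _ => (hafin j k).lt_top).ne (hbfin j),
        ENNReal.toReal_sum (fun k _ => hafin j k), add_div, Finset.sum_div]
    have httc : ∀ k, tt k = (∑ j, a j k) + cc k := by
      intro k
      rw [httdef, hadef, hccdef]
      simp only
      rw [hdeck k, ENNReal.toReal_add
          (ENNReal.sum_lt_top.2 fun j _ => (hafin j k).lt_top).ne (hcfin k),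
        ENNReal.toReal_sum (fun j _ => hafin j k), add_div, Finset.sum_div]
    -- equality of error masses
    have hdiffμ : μ (U' \ g • U') = μ ((g • U') \ U') := by
      have h1 : μ (U' \ g • U') = μ U' - μ (U' ∩ g • U') := by
        rw [← measure_inter_add_diff U' hgU'm]
        rw [ENNReal.add_sub_cancel_left
          ((measure_mono Set.inter_subset_left).trans_lt hU'fin).ne]
      have h2 : μ ((g • U') \ U') = μ (g • U') - μ ((g • U') ∩ U') := by
        rw [← measure_inter_add_diff (g • U') hU'm]
        rw [ENNReal.add_sub_cancel_left
          ((measure_mono Set.inter_subset_left).trans_lt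
            (by rw [measure_smul μ g U']; exact hU'fin)).ne]
      rw [h1, h2, measure_smul μ g U', Set.inter_comm]
    have hbUnion : ⋃ j, (Q j \ g • U') = U' \ g • U' := by
      rw [← Set.iUnion_diff, hQunion]
    have hcUnion : ⋃ k, ((g • Q k) \ U') = (g • U') \ U' := by
      rw [← Set.iUnion_diff, ← hgU'eq]
    have hbsum : ∑ j, μ (Q j \ g • U') = μ (U' \ g • U') := by
      have h := measure_iUnion (μ := μ) (fun i i' hii' =>
        ((hQpair hii').mono Set.diff_subset Set.diff_subset))
        (fun j => (hQm j).diff hgU'm)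
      rw [tsum_fintype, hbUnion] at h
      exact h.symm
    have hcsum : ∑ k, μ ((g • Q k) \ U') = μ ((g • U') \ U') := by
      have h := measure_iUnion (μ := μ) (fun i i' hii' =>
        ((hgQpair hii').mono Set.diff_subset Set.diff_subset))
        (fun k => (hgQm k).diff hU'm)
      rw [tsum_fintype, hcUnion] at h
      exact h.symm
    have hbceq : ∑ j, bb j = ∑ k, cc k := by
      rw [hbbdef, hccdef]
      simp only
      rw [← Finset.sum_div, ← Finset.sum_div,
        ← ENNReal.toReal_sum (fun j _ => hbfin j), ← ENNReal.toReal_sum (fun k _ => hcfin k),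
        hbsum, hcsum, hdiffμ]
    -- smallness of the error mass
    have hUdiff : μ (U \ g • U) < ENNReal.ofReal ε * μ U := by
      refine lt_of_le_of_lt ?_ (hUF g hgF1)
      refine measure_mono ?_
      rw [Set.symmDiff_def]
      exact fun y hy => Set.mem_union_right _ hy
    have hUminus : μ (U \ U') < δ0 := by
      have h1 : μ (U \ U') = μ U - μ U' := measure_diff hU'U hU'm.nullMeasurableSet hU'fin.ne
      rw [h1]
      rw [ENNReal.sub_lt_iff_lt_right hU'fin.ne (measure_mono hU'U), add_comm]
      exact hμU'big
    have hdiffsub : U' \ g • U' ⊆ (U \ g • U) ∪ g • (U \ U') := by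
      intro y hy
      by_cases hyg : y ∈ g • U
      · right
        obtain ⟨u, hu, huy⟩ := hyg
        exact ⟨u, ⟨hu, fun hu' => hy.2 ⟨u, hu', huy⟩⟩, huy⟩
      · exact Or.inl ⟨hU'U hy.1, hyg⟩
    have hδR' : (ENNReal.ofReal ε * μ U).toReal = ε * uR := by
      rw [ENNReal.toReal_mul, ENNReal.toReal_ofReal hε.le]
    have hd1R : (μ (U \ g • U)).toReal ≤ ε * uR := by
      have h := ENNReal.toReal_mono hδ0fin hUdiff.le
      rwa [hδR'] at h
    have hd2R : (μ (U \ U')).toReal ≤ ε * uR := by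
      have h := ENNReal.toReal_mono hδ0fin hUminus.le
      rwa [hδR] at h
    have hUdfin : μ (U \ g • U) ≠ ⊤ := ((measure_mono Set.diff_subset).trans_lt hUt).ne
    have hUmfin : μ (U \ U') ≠ ⊤ := ((measure_mono Set.diff_subset).trans_lt hUt).ne
    have hβR : (μ (U' \ g • U')).toReal ≤ 2 * (ε * uR) := by
      have hsub : μ (U' \ g • U') ≤ μ (U \ g • U) + μ (U \ U') := by
        calc μ (U' \ g • U') ≤ μ ((U \ g • U) ∪ g • (U \ U')) := measure_mono hdiffsub
          _ ≤ μ (U \ g • U) + μ (g • (U \ U')) := measure_union_le _ _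
          _ = μ (U \ g • U) + μ (U \ U') := by rw [measure_smul μ g (U \ U')]
      have h := ENNReal.toReal_mono (by
        exact (ENNReal.add_lt_top.2 ⟨hUdfin.lt_top, hUmfin.lt_top⟩).ne) hsub
      rw [ENNReal.toReal_add hUdfin hUmfin] at h
      linarith
    have hβr : (∑ j, bb j) * r ≤ 1 := by
      have h1 : ∑ j, bb j = (μ (U' \ g • U')).toReal / m := by
        rw [hbbdef]
        simp only
        rw [← Finset.sum_div, ← ENNReal.toReal_sum (fun j _ => hbfin j), hbsum]
      rw [h1, div_mul_eq_mul_div, div_le_one hm0]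
      have h2 : (μ (U' \ g • U')).toReal * r ≤ 2 * (ε * uR) * r :=
        mul_le_mul_of_nonneg_right hβR hr.le
      have h3 : 2 * (ε * uR) * r ≤ 2 * (ε * (2 * m)) * r := by
        have : ε * uR ≤ ε * (2 * m) := mul_le_mul_of_nonneg_left huR2m hε.le
        nlinarith
      have h4 : 2 * (ε * (2 * m)) * r = (4 * ε * r) * m := by ring
      have h5 : (4 * ε * r) * m ≤ 1 * m := mul_le_mul_of_nonneg_right hε4r hm0.le
      linarith
    -- the decomposition of x - ρ g x
    set A : X := ∑ j, ∑ k, a j k • (f (e j) - f (g * e k)) with hAdef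
    set B : X := (∑ j, bb j • f (e j)) - (∑ k, cc k • f (g * e k)) with hBdef
    have hsplit : x - ρ g x = A + B := by
      rw [hρx, hxdef, hAdef, hBdef]
      have e1 : ∑ j, tt j • f (e j) =
          (∑ j, ∑ k, a j k • f (e j)) + ∑ j, bb j • f (e j) := by
        rw [← Finset.sum_add_distrib]
        refine Finset.sum_congr rfl fun j _ => ?_
        rw [htta j, add_smul, Finset.sum_smul]
      have e2 : ∑ k, tt k • f (g * e k) =
          (∑ j, ∑ k, a j k • f (g * e k)) + ∑ k, cc k • f (g * e k) := by
        rw [Finset.sum_comm, ← Finset.sum_add_distrib]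
        refine Finset.sum_congr rfl fun k _ => ?_
        rw [httc k, add_smul, Finset.sum_smul]
      have e3 : ∑ j, ∑ k, a j k • (f (e j) - f (g * e k)) =
          (∑ j, ∑ k, a j k • f (e j)) - ∑ j, ∑ k, a j k • f (g * e k) := by
        rw [← Finset.sum_sub_distrib]
        refine Finset.sum_congr rfl fun j _ => ?_
        rw [← Finset.sum_sub_distrib]
        refine Finset.sum_congr rfl fun k _ => ?_
        rw [smul_sub]
      rw [e1, e2, e3]
      abel
    -- A ∈ Sa
    have hA : A ∈ Sa := by
      have hArw : A = ∑ p ∈ Finset.univ ×ˢ Finset.univ,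
          a p.1 p.2 • (f (e p.1) - f (g * e p.2)) := by
        rw [hAdef, Finset.sum_product]
      rw [hArw]
      refine stmt15_sum_smul_mem hSa_c hSa_0 _ _ _
        (fun p _ => hann p.1 p.2) ?_ ?_
      · rw [Finset.sum_product]
        calc ∑ j, ∑ k, a j k ≤ ∑ j, tt j := by
              refine Finset.sum_le_sum fun j _ => ?_
              rw [htta j]
              exact le_add_of_nonneg_right (hbnn j)
          _ = 1 := htt1
      · rintro ⟨j, k⟩ _ hajk
        have hμne : μ (Q j ∩ g • Q k) ≠ 0 := by
          intro h0
          apply hajk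
          show (μ (Q j ∩ g • Q k)).toReal / m = 0
          rw [h0]
          simp
        obtain ⟨w, hw⟩ := nonempty_of_measure_ne_zero hμne
        obtain ⟨w1, hw1, hw1e⟩ := hw.1.1.2
        obtain ⟨u, hu, huw⟩ := hw.2
        obtain ⟨w2, hw2, hw2e⟩ := (hQsubV k) hu
        have hejm : e j ∈ F1 * KE n0 :=
          ⟨1, Set.mem_insert 1 F, e j, he_mem j, one_mul _⟩
        have hgek : g * e k ∈ F1 * KE n0 :=
          ⟨g, hgF1, e k, he_mem k, rfl⟩
        have hd1 : f (e j * w1) - f (e j) ∈ T := hVuc (e j) hejm w1 hw1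
        have hd2 : f ((g * e k) * w2) - f (g * e k) ∈ T := hVuc (g * e k) hgek w2 hw2
        have hweq1 : e j * w1 = w := hw1e
        have hweq2 : (g * e k) * w2 = w := by
          rw [mul_assoc, (show e k * w2 = u from hw2e)]
          exact huw
        have hdd : f (e j) - f (g * e k) =
            (f ((g * e k) * w2) - f (g * e k)) + -(f (e j * w1) - f (e j)) := by
          rw [hweq1, hweq2]
          abel
        show f (e j) - f (g * e k) ∈ Sa
        rw [hdd]
        exact hT_add (Set.add_mem_add hd2 (hT_neg _ hd1))
    -- B ∈ Sa
    have hB : B ∈ Sa := by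
      rcases eq_or_lt_of_le (Finset.sum_nonneg fun (j : Fin N) _ => hbnn j) with hβ0 | hβ0
      · have hz : ∀ j : Fin N, bb j = 0 :=
          fun j => (Finset.sum_eq_zero_iff_of_nonneg (fun j _ => hbnn j)).1 hβ0.symm j
            (Finset.mem_univ j)
        have hzc : ∀ k : Fin N, cc k = 0 := by
          have h0 : ∑ k, cc k = 0 := by rw [← hbceq, ← hβ0]
          exact fun k => (Finset.sum_eq_zero_iff_of_nonneg (fun k _ => hcnn k)).1 h0 k
            (Finset.mem_univ k)
        have hB0 : B = 0 := by
          rw [hBdef, Finset.sum_eq_zero (fun j _ => by rw [hz j, zero_smul]),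
            Finset.sum_eq_zero (fun k _ => by rw [hzc k, zero_smul]), sub_zero]
        rw [hB0]
        exact hSa_0
      · obtain ⟨p, hp, hpe⟩ := stmt15_sum_eq_smul hconv Finset.univ bb (fun j => f (e j))
          (fun j _ => hbnn j) (fun j _ => hfC (e j)) rfl hβ0
        obtain ⟨q, hq, hqe⟩ := stmt15_sum_eq_smul hconv Finset.univ cc (fun k => f (g * e k))
          (fun k _ => hcnn k) (fun k _ => hfC (g * e k)) hbceq.symm hβ0
        obtain ⟨p', hp', hpe'⟩ := hCrT hp
        obtain ⟨q', hq', hqe'⟩ := hCrT hq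
        have hBeq : B = ((∑ j, bb j) * r) • (p' - q') := by
          rw [hBdef, hpe, hqe, ← hpe', ← hqe', smul_smul, smul_smul, ← smul_sub]
        have hmem : p' - q' ∈ Sa := by
          rw [sub_eq_add_neg]
          exact hT_add (Set.add_mem_add hp' (hT_neg _ hq'))
        rw [hBeq]
        exact stmt15_nice_smul_mem hSa_c hSa_0
          (mul_nonneg (Finset.sum_nonneg fun j _ => hbnn j) hr.le) hβr hmem
    rw [hsplit]
    exact hSa_add (Set.add_mem_add hA hB)
  -- from the key step to a sequence
  obtain ⟨B, hB⟩ := (nhds (0:X)).exists_antitone_basis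
  set KE := CompactExhaustion.choice G with hKEdef
  have hstep : ∀ n : ℕ, ∃ x ∈ C, ∀ g ∈ KE n, x - ρ g x ∈ B n :=
    fun n => key (KE n) (KE.isCompact n) (B n) (hB.mem n)
  choose x hxC hx using hstep
  refine ⟨x, hxC, ?_⟩
  intro g
  rw [Filter.tendsto_def]
  intro W hW
  obtain ⟨mm, _, hmW⟩ := hB.toHasBasis.mem_iff.1 hW
  obtain ⟨n1, hn1⟩ := KE.exists_mem g
  filter_upwards [Filter.eventually_ge_atTop (max mm n1)] with n hn
  have hgn : g ∈ KE n := KE.subset (le_trans (le_max_right mm n1) hn) hn1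
  exact hmW (hB.antitone (le_trans (le_max_left mm n1) hn) (hx n g hgn))
end
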